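/- arXiv:1501.07108 — 3 statements merged into one kernel-verified Lean document; each statement's English description precedes it below -/
import Mathlib

section
/- If words W1 and W2 cover sets A and B of non-edges of an acyclic digraph D respectively, then the concatenation W = W1W2 covers the set A ∪ B. -/
variable {V : Type*}

/-- Letters `x` and `y` alternate in the word `W`: the subword induced by the two
letters has no two equal consecutive letters. -/
def Alternate [DecidableEq V] (W : List V) (x y : V) : Prop :=
  (W.filter (fun z => z = x ∨ z = y)).Chain' (· ≠ ·)

/-- A word is `k`-uniform if every letter of the alphabet occurs exactly `k` times. -/
def Uniform [DecidableEq V] (W : List V) (k : ℕ) : Prop :=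
  ∀ x : V, W.count x = k

/-- A word `W` represents the graph `G`: every vertex occurs in `W` and two distinct
vertices are adjacent iff they alternate in `W`. -/
def Represents [DecidableEq V] (W : List V) (G : SimpleGraph V) : Prop :=
  (∀ x : V, x ∈ W) ∧ ∀ x y : V, x ≠ y → (G.Adj x y ↔ Alternate W x y)

def WordRepresentable [DecidableEq V] (G : SimpleGraph V) : Prop :=
  ∃ W : List V, Represents W G

def KWordRepresentable [DecidableEq V] (G : SimpleGraph V) (k : ℕ) : Prop :=
  ∃ W : List V, Uniform W k ∧ Represents W G

/-- A digraph (relation) is acyclic if it has no directed cycle. -/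
def Acyclic (E : V → V → Prop) : Prop :=
  ∀ x : V, ¬ Relation.TransGen E x x

/-- A digraph is semi-transitive if it is acyclic and for every directed path
`v 0 → v 1 → ⋯ → v k` such that the arc `v 0 → v k` is present, all arcs
`v i → v j` for `i < j` are present. -/
def SemiTransitive (E : V → V → Prop) : Prop :=
  Acyclic E ∧ ∀ (k : ℕ) (v : Fin (k + 1) → V),
    (∀ i : Fin k, E (v i.castSucc) (v i.succ)) →
    E (v 0) (v (Fin.last k)) →
    ∀ i j : Fin (k + 1), i < j → E (v i) (v j)

/-- `E` is an orientation of the graph `G`. -/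
def IsOrientation (G : SimpleGraph V) (E : V → V → Prop) : Prop :=
  ∀ x y : V, G.Adj x y ↔ (E x y ∨ E y x)

/-- The word `W` covers the set `A` of non-edges of the digraph `E` orienting `G`:
`W` is `k`-uniform for some `k`; its initial permutation is a topological sort of `E`
(first occurrences respect reachability); `G` is a subgraph of the graph represented
by `W`; and every pair in `A` is a non-edge of the graph represented by `W`. -/
def Covers [DecidableEq V] (W : List V) (G : SimpleGraph V) (E : V → V → Prop)
    (A : Set (V × V)) : Prop :=
  (∃ k : ℕ, Uniform W k) ∧
  (∀ u v : V, Relation.TransGen E u v → W.idxOf u < W.idxOf v) ∧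
  (∀ x y : V, G.Adj x y → Alternate W x y) ∧
  ∀ p ∈ A, ¬ Alternate W p.1 p.2

/-- `G` is representable by a concatenation of `k` permutations of its vertex set. -/
def PermutationallyRepresentable [DecidableEq V] (G : SimpleGraph V) (k : ℕ) : Prop :=
  ∃ Ps : List (List V), Ps.length = k ∧
    (∀ P ∈ Ps, P.Nodup ∧ ∀ x : V, x ∈ P) ∧
    Represents Ps.flatten G

section Aux
variable {V : Type*} [DecidableEq V]

lemma alt_symm {W : List V} {x y : V} (h : Alternate W x y) : Alternate W y x := by
  unfold Alternate at *
  have : W.filter (fun z => decide (z = y ∨ z = x)) = W.filter (fun z => decide (z = x ∨ z = y)) :=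
    List.filter_congr (fun z _ => by simp [or_comm])
  rw [this]; exact h

lemma uniform_zero {W : List V} (h : Uniform W 0) : W = [] := by
  cases W with
  | nil => rfl
  | cons a t => have := h a; simp [List.count_cons_self] at this

lemma alt_count :
    ∀ (L : List V) (x y : V), x ≠ y → (∀ z ∈ L, z = x ∨ z = y) → L.Chain' (· ≠ ·) →
      L.head? = some x →
      L.count x = L.count y + (if L.getLast? = some x then 1 else 0) := by
  intro L
  induction L with
  | nil => simp
  | cons a t ih =>
    intro x y hxy hm hc hh
    simp only [List.head?_cons, Option.some.injEq] at hh
    subst hh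
    cases t with
    | nil => simp [List.count_singleton, hxy, hxy.symm]
    | cons c t' =>
      have hac : a ≠ c := (List.isChain_cons_cons.mp hc).1
      have hc' : (c :: t').Chain' (· ≠ ·) := (List.isChain_cons_cons.mp hc).2
      have hcval : c = y := by
        rcases hm c (by simp) with h | h
        · exact absurd h.symm hac
        · exact h
      subst hcval
      have hm' : ∀ z ∈ c :: t', z = c ∨ z = a := by
        intro z hz
        rcases hm z (List.mem_cons_of_mem _ hz) with h | h
        · exact Or.inr h
        · exact Or.inl h
      have hih := ih c a hxy.symm hm' hc' (by simp)
      have hlast : (a :: c :: t').getLast? = (c :: t').getLast? := by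
        rw [List.getLast?_cons_cons]
      have hg : (c :: t').getLast? = some a ∨ (c :: t').getLast? = some c := by
        rw [List.getLast?_eq_getLast (by simp)]
        rcases hm' _ (List.getLast_mem (l := c :: t') (by simp)) with h | h
        · right; rw [h]
        · left; rw [h]
      rw [List.count_cons_self, List.count_cons_of_ne hxy, hlast, hih]
      rcases hg with h | h
      · rw [h]
        simp [hxy, hxy.symm, Option.some_inj]
      · rw [h]
        simp [hxy, hxy.symm, Option.some_inj]

lemma head_filter :
    ∀ (L : List V) (x y : V), x ≠ y → L.idxOf x < L.idxOf y →
      (L.filter (fun z => decide (z = x ∨ z = y))).head? = some x := by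
  intro L
  induction L with
  | nil => intro x y _ h; simp [List.idxOf_nil] at h
  | cons a t ih =>
    intro x y hxy h
    by_cases hax : a = x
    · subst hax
      rw [List.filter_cons_of_pos (by simp)]
      rfl
    · by_cases hay : a = y
      · subst hay
        rw [List.idxOf_cons_self] at h
        omega
      · rw [List.filter_cons_of_neg (by simp [hax, hay])]
        rw [List.idxOf_cons_ne _ hax, List.idxOf_cons_ne _ hay] at h
        exact ih x y hxy (Nat.succ_lt_succ_iff.mp h)

/-- Key lemma: concatenating preserves alternation of an edge when indexOf
conditions hold in both words. -/
lemma alt_append {W₁ W₂ : List V} {k₁ k₂ : ℕ} {x y : V} (hxy : x ≠ y)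
    (hu₁ : Uniform W₁ k₁) (hu₂ : Uniform W₂ k₂)
    (ha₁ : Alternate W₁ x y) (ha₂ : Alternate W₂ x y)
    (hi₁ : W₁.idxOf x < W₁.idxOf y) (hi₂ : W₂.idxOf x < W₂.idxOf y) :
    Alternate (W₁ ++ W₂) x y := by
  unfold Alternate at *
  set p : V → Bool := fun z => decide (z = x ∨ z = y) with hp
  rw [List.filter_append, List.Chain', List.isChain_append]
  refine ⟨ha₁, ha₂, ?_⟩
  intro u hu v hv
  set F₁ := W₁.filter p with hF₁
  set F₂ := W₂.filter p with hF₂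
  have hm₁ : ∀ z ∈ F₁, z = x ∨ z = y := by
    intro z hz
    have := List.of_mem_filter hz
    simpa [hp] using this
  -- F₁ is nonempty since u ∈ getLast?
  have hne₁ : F₁ ≠ [] := by
    intro h; rw [h] at hu; simp at hu
  have hcx₁ : F₁.count x = k₁ := by
    rw [hF₁, List.count_filter (by simp [hp])]; exact hu₁ x
  have hcy₁ : F₁.count y = k₁ := by
    rw [hF₁, List.count_filter (by simp [hp])]; exact hu₁ y
  have hh₁ : F₁.head? = some x := head_filter W₁ x y hxy hi₁
  have hcount := alt_count F₁ x y hxy hm₁ ha₁ hh₁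
  have hlast : F₁.getLast? = some y := by
    have hgmem : F₁.getLast hne₁ ∈ F₁ := List.getLast_mem hne₁
    rcases hm₁ _ hgmem with h | h
    · exfalso
      rw [List.getLast?_eq_getLast hne₁, h] at hcount
      simp at hcount
      omega
    · rw [List.getLast?_eq_getLast hne₁, h]
  have hu' : u = y := by
    rw [hlast] at hu; exact (by simpa using hu : y = u).symm
  have hv' : v = x := by
    have := head_filter W₂ x y hxy hi₂
    rw [← hF₂] at this
    rw [this] at hv; exact (by simpa using hv : x = v).symm
  rw [hu', hv']; exact hxy.symm

lemma not_alt_append_left {W₁ W₂ : List V} {x y : V} (h : ¬ Alternate W₁ x y) :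
    ¬ Alternate (W₁ ++ W₂) x y := by
  unfold Alternate at *
  rw [List.filter_append, List.Chain', List.isChain_append]
  intro hh; exact h hh.1

lemma not_alt_append_right {W₁ W₂ : List V} {x y : V} (h : ¬ Alternate W₂ x y) :
    ¬ Alternate (W₁ ++ W₂) x y := by
  unfold Alternate at *
  rw [List.filter_append, List.Chain', List.isChain_append]
  intro hh; exact h hh.2.1

end Aux

/-- If words `W₁` and `W₂` cover sets `A` and `B` of non-edges of an
acyclic digraph `D` respectively, then `W₁W₂` covers `A ∪ B`. -/
theorem stmt_0 {V : Type*} [Fintype V] [DecidableEq V] (G : SimpleGraph V)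
    (E : V → V → Prop) (hor : IsOrientation G E) (hac : Acyclic E)
    (A B : Set (V × V))
    (hA : ∀ p ∈ A, ¬ G.Adj p.1 p.2) (hB : ∀ p ∈ B, ¬ G.Adj p.1 p.2)
    (W₁ W₂ : List V) (h₁ : Covers W₁ G E A) (h₂ : Covers W₂ G E B) :
    Covers (W₁ ++ W₂) G E (A ∪ B) := by
  obtain ⟨⟨k₁, hu₁⟩, hi₁, he₁, hn₁⟩ := h₁
  obtain ⟨⟨k₂, hu₂⟩, hi₂, he₂, hn₂⟩ := h₂
  refine ⟨⟨k₁ + k₂, ?_⟩, ?_, ?_, ?_⟩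
  · intro x
    rw [List.count_append, hu₁ x, hu₂ x]
  · intro u v htr
    by_cases hk : k₁ = 0
    · have hnil : W₁ = [] := uniform_zero (hk ▸ hu₁)
      subst hnil
      simpa using hi₂ u v htr
    · have hmemu : u ∈ W₁ := by
        rw [← List.count_pos_iff, hu₁ u]; omega
      have hmemv : v ∈ W₁ := by
        rw [← List.count_pos_iff, hu₁ v]; omega
      rw [List.idxOf_append_of_mem hmemu, List.idxOf_append_of_mem hmemv]
      exact hi₁ u v htr
  · intro x y hadj
    have hxy : x ≠ y := hadj.ne
    rcases (hor x y).mp hadj with hE | hE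
    · exact alt_append hxy hu₁ hu₂ (he₁ x y hadj) (he₂ x y hadj)
        (hi₁ x y (.single hE)) (hi₂ x y (.single hE))
    · exact alt_symm (alt_append hxy.symm hu₁ hu₂ (alt_symm (he₁ x y hadj))
        (alt_symm (he₂ x y hadj)) (hi₁ y x (.single hE)) (hi₂ y x (.single hE)))
  · intro p hp
    rcases hp with hp | hp
    · exact not_alt_append_left (hn₁ p hp)
    · exact not_alt_append_right (hn₂ p hp)
end

section
/- Let D = (V,E) be a semi-transitively oriented graph and v ∈ V. Then the set of non-edges of D incident with v can be covered by a 2-uniform word. -/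
variable {V : Type*}

private lemma exists_topo_list {α : Type*} [Finite α] (r : α → α → Prop)
    (htr : Transitive r) (hirr : ∀ x, ¬ r x x) :
    ∃ L : List α, L.Nodup ∧ (∀ x, x ∈ L) ∧ L.Pairwise (fun a b => ¬ r b a) := by
  classical
  cases nonempty_fintype α
  have hwf : WellFounded r := by
    haveI : IsTrans α r := ⟨fun a b c hab hbc => htr hab hbc⟩
    haveI : IsIrrefl α r := ⟨hirr⟩
    exact Finite.wellFounded_of_trans_of_irrefl r
  have key : ∀ S : Finset α, ∃ L : List α, L.Nodup ∧ (∀ x, x ∈ L ↔ x ∈ S) ∧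
      L.Pairwise (fun a b => ¬ r b a) := by
    intro S
    induction S using Finset.strongInductionOn with
    | _ S ih =>
      rcases S.eq_empty_or_nonempty with rfl | hne
      · exact ⟨[], by simp, by simp, by simp⟩
      · obtain ⟨m, hmS, hmin⟩ := hwf.has_min ↑S (Finset.coe_nonempty.2 hne)
        obtain ⟨L', h1, h2, h3⟩ := ih (S.erase m) (Finset.erase_ssubset hmS)
        refine ⟨m :: L', ?_, ?_, ?_⟩
        · exact List.nodup_cons.2 ⟨fun hm =>
            (Finset.notMem_erase m S) ((h2 m).1 hm), h1⟩
        · intro x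
          rw [List.mem_cons, h2 x, Finset.mem_erase]
          constructor
          · rintro (rfl | ⟨-, h⟩)
            · exact hmS
            · exact h
          · intro hx
            by_cases hxm : x = m
            · exact Or.inl hxm
            · exact Or.inr ⟨hxm, hx⟩
        · exact List.pairwise_cons.2
            ⟨fun b hb => hmin b (Finset.mem_coe.2 (Finset.mem_of_mem_erase ((h2 b).1 hb))), h3⟩
  obtain ⟨L, h1, h2, h3⟩ := key Finset.univ
  exact ⟨L, h1, fun x => (h2 x).2 (Finset.mem_univ x), h3⟩

private lemma pairwise_of_idxOf_lt {α : Type*} [DecidableEq α] {Q : α → α → Prop} :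
    ∀ {l : List α}, l.Pairwise Q → ∀ {a b : α}, a ∈ l → b ∈ l →
      l.idxOf a < l.idxOf b → Q a b := by
  intro l
  induction l with
  | nil => intro _ a b ha; simp at ha
  | cons h t ih =>
    intro hpw a b ha hb hlt
    rw [List.pairwise_cons] at hpw
    by_cases hah : a = h
    · subst hah
      have hbh : b ≠ a := by rintro rfl; exact lt_irrefl _ hlt
      have hbt : b ∈ t := (List.mem_cons.1 hb).resolve_left hbh
      exact hpw.1 b hbt
    · have hat : a ∈ t := (List.mem_cons.1 ha).resolve_left hah
      have hbh : b ≠ h := by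
        rintro rfl
        rw [List.idxOf_cons_self] at hlt
        exact Nat.not_lt_zero _ hlt
      have hbt : b ∈ t := (List.mem_cons.1 hb).resolve_left hbh
      apply ih hpw.2 hat hbt
      rw [List.idxOf_cons_ne _ (Ne.symm hah), List.idxOf_cons_ne _ (Ne.symm hbh)] at hlt
      omega

private lemma filter_pair_nil {α : Type*} [DecidableEq α] {l : List α} {x y : α}
    (hx : x ∉ l) (hy : y ∉ l) : l.filter (fun z => decide (z = x ∨ z = y)) = [] := by
  rw [List.filter_eq_nil_iff]
  intro a ha
  simp only [decide_eq_true_eq]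
  rintro (rfl | rfl)
  exacts [hx ha, hy ha]

private lemma filter_pair_comm {α : Type*} [DecidableEq α] (l : List α) (x y : α) :
    l.filter (fun z => decide (z = x ∨ z = y)) = l.filter (fun z => decide (z = y ∨ z = x)) :=
  List.filter_congr (fun a _ => by simp [or_comm])

private lemma filter_pair_left {α : Type*} [DecidableEq α] : ∀ {l : List α} {x y : α}, l.Nodup →
    x ∈ l → y ∉ l → l.filter (fun z => decide (z = x ∨ z = y)) = [x] := by
  intro l
  induction l with
  | nil => intro x y _ hx; simp at hx
  | cons h t ih =>
    intro x y hnd hx hy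
    rw [List.nodup_cons] at hnd
    rcases List.mem_cons.1 hx with rfl | hxt
    · rw [List.filter_cons_of_pos (by simp)]
      have : t.filter (fun z => decide (z = x ∨ z = y)) = [] :=
        filter_pair_nil hnd.1 (fun hyt => hy (List.mem_cons_of_mem _ hyt))
      rw [this]
    · have hhx : h ≠ x := by rintro rfl; exact hnd.1 hxt
      have hhy : h ≠ y := by rintro rfl; exact hy List.mem_cons_self
      rw [List.filter_cons_of_neg (by simp [hhx, hhy])]
      exact ih hnd.2 hxt (fun hyt => hy (List.mem_cons_of_mem _ hyt))

private lemma filter_pair_right {α : Type*} [DecidableEq α] {l : List α} {x y : α}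
    (hnd : l.Nodup) (hx : x ∉ l) (hy : y ∈ l) :
    l.filter (fun z => decide (z = x ∨ z = y)) = [y] := by
  rw [filter_pair_comm]
  exact filter_pair_left hnd hy hx

private lemma filter_pair_both {α : Type*} [DecidableEq α] : ∀ {l : List α} {x y : α}, l.Nodup →
    x ∈ l → y ∈ l → x ≠ y →
    l.filter (fun z => decide (z = x ∨ z = y)) = [x, y] ∨
    l.filter (fun z => decide (z = x ∨ z = y)) = [y, x] := by
  intro l
  induction l with
  | nil => intro x y _ hx; simp at hx
  | cons h t ih =>
    intro x y hnd hx hy hne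
    rw [List.nodup_cons] at hnd
    rcases List.mem_cons.1 hx with rfl | hxt
    · left
      rw [List.filter_cons_of_pos (by simp)]
      have hyt : y ∈ t := (List.mem_cons.1 hy).resolve_left (Ne.symm hne)
      rw [filter_pair_right hnd.2 hnd.1 hyt]
    · rcases List.mem_cons.1 hy with rfl | hyt
      · right
        rw [List.filter_cons_of_pos (by simp)]
        rw [filter_pair_left hnd.2 hxt hnd.1]
      · have hhx : h ≠ x := by rintro rfl; exact hnd.1 hxt
        have hhy : h ≠ y := by rintro rfl; exact hnd.1 hyt
        rw [List.filter_cons_of_neg (by simp [hhx, hhy])]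
        exact ih hnd.2 hxt hyt hne

private lemma chain'_quad {α : Type*} {x y : α} (h : x ≠ y) :
    List.Chain' (· ≠ ·) [x, y, x, y] :=
  List.isChain_cons_cons.2 ⟨h, List.isChain_cons_cons.2 ⟨h.symm, List.isChain_cons_cons.2
    ⟨h, List.IsChain.singleton _⟩⟩⟩

private lemma alternate_comm' {V : Type*} [DecidableEq V] (W : List V) (x y : V) :
    Alternate W x y ↔ Alternate W y x := by
  unfold Alternate
  rw [filter_pair_comm]

private lemma transGen_chain {α : Type*} {E : α → α → Prop} {a b : α}
    (h : Relation.TransGen E a b) :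
    ∃ l : List α, l ≠ [] ∧ List.Chain E a l ∧
      (a :: l).getLast (List.cons_ne_nil a l) = b := by
  induction h using Relation.TransGen.head_induction_on with
  | single h => exact ⟨[b], List.cons_ne_nil _ _, List.Chain.cons h List.Chain.nil, by simp⟩
  | head h' h ihP =>
    obtain ⟨l, hne, hch, hl⟩ := ihP
    exact ⟨_ :: l, List.cons_ne_nil _ _, List.Chain.cons h' hch,
      by rw [List.getLast_cons (List.cons_ne_nil _ _)]; exact hl⟩

private lemma chain_append_last {α : Type*} {E : α → α → Prop} :
    ∀ {a : α} {l₁ : List α}, List.Chain E a l₁ → ∀ {l₂ : List α},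
      List.Chain E ((a :: l₁).getLast (List.cons_ne_nil a l₁)) l₂ →
      List.Chain E a (l₁ ++ l₂) := by
  intro a l₁
  induction l₁ generalizing a with
  | nil => intro _ l₂ h; simpa using h
  | cons b t ih =>
    intro h l₂ h₂
    replace h : E a b ∧ List.Chain E b t := List.isChain_cons_cons.1 h
    refine List.Chain.cons h.1 (ih h.2 ?_)
    rwa [List.getLast_cons (List.cons_ne_nil b t)] at h₂

private lemma semiTrans_shortcut {α : Type*} {E : α → α → Prop} (hst : SemiTransitive E)
    {x y z : α} (hxy : E x y) (hxz : Relation.TransGen E x z)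
    (hzy : Relation.TransGen E z y) : E x z ∧ E z y := by
  obtain ⟨l₁, h1ne, h1ch, h1l⟩ := transGen_chain hxz
  obtain ⟨l₂, h2ne, h2ch, h2l⟩ := transGen_chain hzy
  have hch : List.Chain E x (l₁ ++ l₂) := by
    apply chain_append_last h1ch
    rw [h1l]
    exact h2ch
  set k := (l₁ ++ l₂).length with hk
  have hLlen : (x :: (l₁ ++ l₂)).length = k + 1 := by simp [hk]
  have hvfb : ∀ i : Fin (k + 1), (i : ℕ) < (x :: (l₁ ++ l₂)).length := by
    intro i; rw [hLlen]; exact i.isLt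
  set vf : Fin (k + 1) → α := fun i => (x :: (l₁ ++ l₂)).get ⟨i, hvfb i⟩ with hvf
  have hch' : List.Chain' E (x :: (l₁ ++ l₂)) := hch
  have harcs : ∀ i : Fin k, E (vf i.castSucc) (vf i.succ) := by
    intro i
    have hi' : (i : ℕ) < l₁.length + l₂.length := by
      have h' : (i : ℕ) < (l₁ ++ l₂).length := i.isLt
      rwa [List.length_append] at h'
    have hb : (i : ℕ) < (x :: (l₁ ++ l₂)).length - 1 := by
      rw [List.length_cons, List.length_append]
      omega
    exact List.isChain_iff_getElem.1 hch' i (by omega)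
  have h0 : vf 0 = x := rfl
  have hm1 : l₁.length < k + 1 := by
    have : 0 < l₂.length := List.length_pos_iff.2 h2ne
    simp only [hk, List.length_append]; omega
  have hmz : vf ⟨l₁.length, hm1⟩ = z := by
    have hlt : l₁.length < (x :: l₁).length := by simp
    have hstep : vf ⟨l₁.length, hm1⟩ = (x :: l₁)[l₁.length]'hlt := by
      show (x :: (l₁ ++ l₂)).get ⟨l₁.length, _⟩ = _
      rw [List.get_eq_getElem]
      have hxl : (x :: (l₁ ++ l₂)) = (x :: l₁) ++ l₂ := by simp
      simp only [hxl]
      exact List.getElem_append_left hlt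
    rw [hstep, ← h1l, List.getLast_eq_getElem]
    rfl
  have hlast : vf (Fin.last k) = y := by
    have h2 : (x :: (l₁ ++ l₂)).getLast (List.cons_ne_nil _ _) = y := by
      rw [List.getLast_cons (show l₁ ++ l₂ ≠ [] by simp [h2ne]),
        List.getLast_append_of_ne_nil _ h2ne]
      rw [List.getLast_cons h2ne] at h2l
      exact h2l
    rw [← h2, List.getLast_eq_getElem]
    rfl
  have hkey := hst.2 k vf harcs (by rw [h0, hlast]; exact hxy)
  have hpos : 0 < l₁.length := List.length_pos_iff.2 h1ne
  have hmk : l₁.length < k := by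
    have : 0 < l₂.length := List.length_pos_iff.2 h2ne
    simp only [hk, List.length_append]; omega
  constructor
  · have := hkey 0 ⟨l₁.length, hm1⟩ (by simp [Fin.lt_def]; omega)
    rwa [h0, hmz] at this
  · have := hkey ⟨l₁.length, hm1⟩ (Fin.last k) (by simp [Fin.lt_def]; omega)
    rwa [hmz, hlast] at this

/-- In a semi-transitively oriented graph, the non-edges incident with a
given vertex `v` can be covered by a 2-uniform word. -/
theorem stmt_1 {V : Type*} [Fintype V] [DecidableEq V] (G : SimpleGraph V)
    (E : V → V → Prop) (hor : IsOrientation G E) (hst : SemiTransitive E) (v : V) :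
    ∃ W : List V, Uniform W 2 ∧
      Covers W G E {p : V × V | p.1 ≠ p.2 ∧ ¬ G.Adj p.1 p.2 ∧ (p.1 = v ∨ p.2 = v)} := by
  classical
  have hac : ∀ x : V, ¬ Relation.TransGen E x x := hst.1
  obtain ⟨L, hLnd, hLmem, hLpw⟩ :=
    exists_topo_list (Relation.TransGen E) (fun _ _ _ hab hbc => hab.trans hbc) hac
  set LA := L.filter (fun u => decide (u ≠ v ∧ ¬ E u v ∧ ¬ E v u ∧ Relation.TransGen E u v))
    with hLA
  set LI := L.filter (fun u => decide (E u v)) with hLI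
  set LC := L.filter (fun u => decide (u ≠ v ∧ ¬ E u v ∧ ¬ E v u ∧
    ¬ Relation.TransGen E u v ∧ ¬ Relation.TransGen E v u)) with hLC
  set LO := L.filter (fun u => decide (E v u)) with hLO
  set LB := L.filter (fun u => decide (u ≠ v ∧ ¬ E u v ∧ ¬ E v u ∧ Relation.TransGen E v u))
    with hLB
  have memLA : ∀ u : V, u ∈ LA ↔ (u ≠ v ∧ ¬ E u v ∧ ¬ E v u ∧ Relation.TransGen E u v) := by
    intro u; rw [hLA, List.mem_filter]; simp [hLmem u]
  have memLI : ∀ u : V, u ∈ LI ↔ E u v := by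
    intro u; rw [hLI, List.mem_filter]; simp [hLmem u]
  have memLC : ∀ u : V, u ∈ LC ↔ (u ≠ v ∧ ¬ E u v ∧ ¬ E v u ∧
      ¬ Relation.TransGen E u v ∧ ¬ Relation.TransGen E v u) := by
    intro u; rw [hLC, List.mem_filter]; simp [hLmem u]
  have memLO : ∀ u : V, u ∈ LO ↔ E v u := by
    intro u; rw [hLO, List.mem_filter]; simp [hLmem u]
  have memLB : ∀ u : V, u ∈ LB ↔ (u ≠ v ∧ ¬ E u v ∧ ¬ E v u ∧ Relation.TransGen E v u) := by
    intro u; rw [hLB, List.mem_filter]; simp [hLmem u]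
  have ndLA : LA.Nodup := hLnd.filter _
  have ndLI : LI.Nodup := hLnd.filter _
  have ndLC : LC.Nodup := hLnd.filter _
  have ndLO : LO.Nodup := hLnd.filter _
  have ndLB : LB.Nodup := hLnd.filter _
  have pwLA : LA.Pairwise (fun a b => ¬ Relation.TransGen E b a) :=
    List.Pairwise.sublist List.filter_sublist hLpw
  have pwLI : LI.Pairwise (fun a b => ¬ Relation.TransGen E b a) :=
    List.Pairwise.sublist List.filter_sublist hLpw
  have pwLC : LC.Pairwise (fun a b => ¬ Relation.TransGen E b a) :=
    List.Pairwise.sublist List.filter_sublist hLpw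
  have pwLO : LO.Pairwise (fun a b => ¬ Relation.TransGen E b a) :=
    List.Pairwise.sublist List.filter_sublist hLpw
  have pwLB : LB.Pairwise (fun a b => ¬ Relation.TransGen E b a) :=
    List.Pairwise.sublist List.filter_sublist hLpw
  have hvA : v ∉ LA := fun hm => ((memLA v).1 hm).1 rfl
  have hvI : v ∉ LI := fun hm => hac v (Relation.TransGen.single ((memLI v).1 hm))
  have hvC : v ∉ LC := fun hm => ((memLC v).1 hm).1 rfl
  have hvO : v ∉ LO := fun hm => hac v (Relation.TransGen.single ((memLO v).1 hm))
  have hvB : v ∉ LB := fun hm => ((memLB v).1 hm).1 rfl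
  -- class bundles
  have memsI : ∀ z : V, E z v → z ≠ v ∧ z ∈ LI ∧ z ∉ LA ∧ z ∉ LC ∧ z ∉ LO ∧ z ∉ LB := by
    intro z hz
    refine ⟨?_, (memLI z).2 hz, fun hm => ((memLA z).1 hm).2.1 hz,
      fun hm => ((memLC z).1 hm).2.1 hz,
      fun hm => hac v ((Relation.TransGen.single ((memLO z).1 hm)).trans
        (Relation.TransGen.single hz)),
      fun hm => ((memLB z).1 hm).2.1 hz⟩
    exact fun h => hac v (Relation.TransGen.single (by rw [h] at hz; exact hz))
  have memsO : ∀ z : V, E v z → z ≠ v ∧ z ∈ LO ∧ z ∉ LA ∧ z ∉ LI ∧ z ∉ LC ∧ z ∉ LB := by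
    intro z hz
    refine ⟨?_, (memLO z).2 hz, fun hm => ((memLA z).1 hm).2.2.1 hz,
      fun hm => hac v ((Relation.TransGen.single hz).trans
        (Relation.TransGen.single ((memLI z).1 hm))),
      fun hm => ((memLC z).1 hm).2.2.2.2 (Relation.TransGen.single hz),
      fun hm => ((memLB z).1 hm).2.2.1 hz⟩
    exact fun h => hac v (Relation.TransGen.single (by rw [h] at hz; exact hz))
  have memsA : ∀ z : V, z ≠ v → ¬ E z v → ¬ E v z → Relation.TransGen E z v →
      z ∈ LA ∧ z ∉ LI ∧ z ∉ LC ∧ z ∉ LO ∧ z ∉ LB := by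
    intro z h1 h2 h3 h4
    exact ⟨(memLA z).2 ⟨h1, h2, h3, h4⟩, fun hm => h2 ((memLI z).1 hm),
      fun hm => ((memLC z).1 hm).2.2.2.1 h4, fun hm => h3 ((memLO z).1 hm),
      fun hm => hac v (((memLB z).1 hm).2.2.2.trans h4)⟩
  have memsB : ∀ z : V, z ≠ v → ¬ E z v → ¬ E v z → Relation.TransGen E v z →
      z ∈ LB ∧ z ∉ LA ∧ z ∉ LI ∧ z ∉ LC ∧ z ∉ LO := by
    intro z h1 h2 h3 h4
    exact ⟨(memLB z).2 ⟨h1, h2, h3, h4⟩, fun hm => hac v (h4.trans ((memLA z).1 hm).2.2.2),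
      fun hm => h2 ((memLI z).1 hm), fun hm => ((memLC z).1 hm).2.2.2.2 h4,
      fun hm => h3 ((memLO z).1 hm)⟩
  have memsC : ∀ z : V, z ≠ v → ¬ E z v → ¬ E v z → ¬ Relation.TransGen E z v →
      ¬ Relation.TransGen E v z →
      z ∈ LC ∧ z ∉ LA ∧ z ∉ LI ∧ z ∉ LO ∧ z ∉ LB := by
    intro z h1 h2 h3 h4 h5
    exact ⟨(memLC z).2 ⟨h1, h2, h3, h4, h5⟩, fun hm => h4 ((memLA z).1 hm).2.2.2,
      fun hm => h4 (Relation.TransGen.single ((memLI z).1 hm)),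
      fun hm => h5 (Relation.TransGen.single ((memLO z).1 hm)),
      fun hm => h5 ((memLB z).1 hm).2.2.2⟩
  set W := LA ++ (LI ++ (LC ++ (LA ++ ([v] ++ (LO ++ (LI ++ ([v] ++ (LB ++
    (LC ++ (LO ++ LB)))))))))) with hW
  -- counts
  have cntLA : ∀ x : V, LA.count x =
      if (x ≠ v ∧ ¬ E x v ∧ ¬ E v x ∧ Relation.TransGen E x v) then 1 else 0 := by
    intro x
    by_cases h : (x ≠ v ∧ ¬ E x v ∧ ¬ E v x ∧ Relation.TransGen E x v)
    · rw [if_pos h]; exact List.count_eq_one_of_mem ndLA ((memLA x).2 h)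
    · rw [if_neg h]; exact List.count_eq_zero.2 fun hm => h ((memLA x).1 hm)
  have cntLI : ∀ x : V, LI.count x = if E x v then 1 else 0 := by
    intro x
    by_cases h : E x v
    · rw [if_pos h]; exact List.count_eq_one_of_mem ndLI ((memLI x).2 h)
    · rw [if_neg h]; exact List.count_eq_zero.2 fun hm => h ((memLI x).1 hm)
  have cntLC : ∀ x : V, LC.count x = if (x ≠ v ∧ ¬ E x v ∧ ¬ E v x ∧
      ¬ Relation.TransGen E x v ∧ ¬ Relation.TransGen E v x) then 1 else 0 := by
    intro x
    by_cases h : (x ≠ v ∧ ¬ E x v ∧ ¬ E v x ∧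
      ¬ Relation.TransGen E x v ∧ ¬ Relation.TransGen E v x)
    · rw [if_pos h]; exact List.count_eq_one_of_mem ndLC ((memLC x).2 h)
    · rw [if_neg h]; exact List.count_eq_zero.2 fun hm => h ((memLC x).1 hm)
  have cntLO : ∀ x : V, LO.count x = if E v x then 1 else 0 := by
    intro x
    by_cases h : E v x
    · rw [if_pos h]; exact List.count_eq_one_of_mem ndLO ((memLO x).2 h)
    · rw [if_neg h]; exact List.count_eq_zero.2 fun hm => h ((memLO x).1 hm)
  have cntLB : ∀ x : V, LB.count x =
      if (x ≠ v ∧ ¬ E x v ∧ ¬ E v x ∧ Relation.TransGen E v x) then 1 else 0 := by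
    intro x
    by_cases h : (x ≠ v ∧ ¬ E x v ∧ ¬ E v x ∧ Relation.TransGen E v x)
    · rw [if_pos h]; exact List.count_eq_one_of_mem ndLB ((memLB x).2 h)
    · rw [if_neg h]; exact List.count_eq_zero.2 fun hm => h ((memLB x).1 hm)
  have hUnif : Uniform W 2 := by
    intro x
    rw [hW]
    simp only [List.count_append, cntLA, cntLI, cntLC, cntLO, cntLB]
    by_cases h1 : x = v
    · subst h1
      have hE : ¬ E x x := fun h => hac x (Relation.TransGen.single h)
      simp [hE]
    · have hvx : ¬ v = x := fun h => h1 h.symm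
      by_cases h2 : E x v
      · have hvE : ¬ E v x := fun h => hac v
          ((Relation.TransGen.single h).trans (Relation.TransGen.single h2))
        simp [h1, hvx, h2, hvE]
      · by_cases h3 : E v x
        · simp [h1, hvx, h2, h3]
        · by_cases h4 : Relation.TransGen E x v
          · have h5 : ¬ Relation.TransGen E v x := fun h => hac v (h.trans h4)
            simp [h1, hvx, h2, h3, h4, h5]
          · by_cases h5 : Relation.TransGen E v x
            · simp [h1, hvx, h2, h3, h4, h5]
            · simp [h1, hvx, h2, h3, h4, h5]
  -- position lemmas
  have gA : ∀ u : V, u ≠ v → ¬ E u v → ¬ E v u → Relation.TransGen E u v →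
      W.idxOf u = LA.idxOf u := by
    intro u h1 h2 h3 h4
    rw [hW, List.idxOf_append_of_mem ((memLA u).2 ⟨h1, h2, h3, h4⟩)]
  have gI : ∀ u : V, E u v → W.idxOf u = LA.length + LI.idxOf u := by
    intro u h
    obtain ⟨-, hm, hA, -, -, -⟩ := memsI u h
    rw [hW, List.idxOf_append_of_notMem hA, List.idxOf_append_of_mem hm]
  have gC : ∀ u : V, u ≠ v → ¬ E u v → ¬ E v u → ¬ Relation.TransGen E u v →
      ¬ Relation.TransGen E v u →
      W.idxOf u = LA.length + (LI.length + LC.idxOf u) := by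
    intro u h1 h2 h3 h4 h5
    obtain ⟨hm, hA, hI, -, -⟩ := memsC u h1 h2 h3 h4 h5
    rw [hW, List.idxOf_append_of_notMem hA, List.idxOf_append_of_notMem hI,
      List.idxOf_append_of_mem hm]
  have gv : W.idxOf v = LA.length + (LI.length + (LC.length + LA.length)) := by
    rw [hW, List.idxOf_append_of_notMem hvA, List.idxOf_append_of_notMem hvI,
      List.idxOf_append_of_notMem hvC, List.idxOf_append_of_notMem hvA,
      List.idxOf_append_of_mem (List.mem_singleton_self v), List.idxOf_cons_self]
    omega
  have gO : ∀ u : V, E v u → W.idxOf u =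
      LA.length + (LI.length + (LC.length + (LA.length + (1 + LO.idxOf u)))) := by
    intro u h
    obtain ⟨hne, hm, hA, hI, hC, -⟩ := memsO u h
    have hv1 : u ∉ [v] := fun hm' => hne (List.mem_singleton.1 hm')
    rw [hW, List.idxOf_append_of_notMem hA, List.idxOf_append_of_notMem hI,
      List.idxOf_append_of_notMem hC, List.idxOf_append_of_notMem hA,
      List.idxOf_append_of_notMem hv1, List.idxOf_append_of_mem hm]
    simp only [List.length_singleton]
  have gB : ∀ u : V, u ≠ v → ¬ E u v → ¬ E v u → Relation.TransGen E v u →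
      W.idxOf u = LA.length + (LI.length + (LC.length + (LA.length + (1 +
        (LO.length + (LI.length + (1 + LB.idxOf u))))))) := by
    intro u h1 h2 h3 h4
    obtain ⟨hm, hA, hI, hC, hO⟩ := memsB u h1 h2 h3 h4
    have hv1 : u ∉ [v] := fun hm' => h1 (List.mem_singleton.1 hm')
    rw [hW, List.idxOf_append_of_notMem hA, List.idxOf_append_of_notMem hI,
      List.idxOf_append_of_notMem hC, List.idxOf_append_of_notMem hA,
      List.idxOf_append_of_notMem hv1, List.idxOf_append_of_notMem hO,
      List.idxOf_append_of_notMem hI, List.idxOf_append_of_notMem hv1,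
      List.idxOf_append_of_mem hm]
    simp only [List.length_singleton]
  have idx_block : ∀ {l : List V}, l.Pairwise (fun a b => ¬ Relation.TransGen E b a) →
      ∀ {u w : V}, u ∈ l → w ∈ l → Relation.TransGen E u w →
      l.idxOf u < l.idxOf w := by
    intro l hpw u w hu hw huw
    rcases lt_trichotomy (l.idxOf u) (l.idxOf w) with h | h | h
    · exact h
    · exfalso
      have : u = w := (List.idxOf_inj hu).1 h
      subst this
      exact hac u huw
    · exact absurd huw (pairwise_of_idxOf_lt hpw hw hu h)
  have classify : ∀ u : V, v = u ∨ E u v ∨ E v u ∨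
      (u ≠ v ∧ ¬ E u v ∧ ¬ E v u ∧ Relation.TransGen E u v) ∨
      (u ≠ v ∧ ¬ E u v ∧ ¬ E v u ∧ Relation.TransGen E v u) ∨
      (u ≠ v ∧ ¬ E u v ∧ ¬ E v u ∧ ¬ Relation.TransGen E u v ∧
        ¬ Relation.TransGen E v u) := by
    intro u
    by_cases h1 : u = v
    · exact Or.inl h1.symm
    by_cases h2 : E u v
    · exact Or.inr (Or.inl h2)
    by_cases h3 : E v u
    · exact Or.inr (Or.inr (Or.inl h3))
    by_cases h4 : Relation.TransGen E u v
    · exact Or.inr (Or.inr (Or.inr (Or.inl ⟨h1, h2, h3, h4⟩)))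
    by_cases h5 : Relation.TransGen E v u
    · exact Or.inr (Or.inr (Or.inr (Or.inr (Or.inl ⟨h1, h2, h3, h5⟩))))
    · exact Or.inr (Or.inr (Or.inr (Or.inr (Or.inr ⟨h1, h2, h3, h4, h5⟩))))
  have hOrd : ∀ u w : V, Relation.TransGen E u w → W.idxOf u < W.idxOf w := by
    intro u w huw
    rcases classify u with rfl | huI | huO | ⟨hu1, hu2, hu3, hu4⟩ | ⟨hu1, hu2, hu3, hu4⟩ |
      ⟨hu1, hu2, hu3, hu4, hu5⟩
    · -- u = v
      rcases classify w with rfl | hwI | hwO | ⟨hw1, hw2, hw3, hw4⟩ | ⟨hw1, hw2, hw3, hw4⟩ |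
        ⟨hw1, hw2, hw3, hw4, hw5⟩
      · exact absurd huw (hac v)
      · exact absurd (huw.trans (Relation.TransGen.single hwI)) (hac v)
      · have h1 := gv
        have h2 := gO w hwO
        omega
      · exact absurd (huw.trans hw4) (hac v)
      · have h1 := gv
        have h2 := gB w hw1 hw2 hw3 hw4
        omega
      · exact absurd huw hw5
    · -- u ∈ I
      have hbu : LI.idxOf u < LI.length := List.idxOf_lt_length_iff.2 ((memLI u).2 huI)
      rcases classify w with rfl | hwI | hwO | ⟨hw1, hw2, hw3, hw4⟩ | ⟨hw1, hw2, hw3, hw4⟩ |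
        ⟨hw1, hw2, hw3, hw4, hw5⟩
      · have h1 := gI u huI
        have h2 := gv
        omega
      · have h1 := gI u huI
        have h2 := gI w hwI
        have hlt := idx_block pwLI ((memLI u).2 huI) ((memLI w).2 hwI) huw
        omega
      · have h1 := gI u huI
        have h2 := gO w hwO
        omega
      · exact absurd (semiTrans_shortcut hst huI huw hw4).2 hw2
      · have h1 := gI u huI
        have h2 := gB w hw1 hw2 hw3 hw4
        omega
      · have h1 := gI u huI
        have h2 := gC w hw1 hw2 hw3 hw4 hw5
        omega
    · -- u ∈ O
      have hbu : LO.idxOf u < LO.length := List.idxOf_lt_length_iff.2 ((memLO u).2 huO)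
      rcases classify w with rfl | hwI | hwO | ⟨hw1, hw2, hw3, hw4⟩ | ⟨hw1, hw2, hw3, hw4⟩ |
        ⟨hw1, hw2, hw3, hw4, hw5⟩
      · exact absurd ((Relation.TransGen.single huO).trans huw) (hac v)
      · exact absurd ((Relation.TransGen.single huO).trans
          (huw.trans (Relation.TransGen.single hwI))) (hac v)
      · have h1 := gO u huO
        have h2 := gO w hwO
        have hlt := idx_block pwLO ((memLO u).2 huO) ((memLO w).2 hwO) huw
        omega
      · exact absurd ((Relation.TransGen.single huO).trans (huw.trans hw4)) (hac v)
      · have h1 := gO u huO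
        have h2 := gB w hw1 hw2 hw3 hw4
        omega
      · exact absurd ((Relation.TransGen.single huO).trans huw) hw5
    · -- u ∈ A
      have hbu : LA.idxOf u < LA.length :=
        List.idxOf_lt_length_iff.2 ((memLA u).2 ⟨hu1, hu2, hu3, hu4⟩)
      rcases classify w with rfl | hwI | hwO | ⟨hw1, hw2, hw3, hw4⟩ | ⟨hw1, hw2, hw3, hw4⟩ |
        ⟨hw1, hw2, hw3, hw4, hw5⟩
      · have h1 := gA u hu1 hu2 hu3 hu4
        have h2 := gv
        omega
      · have h1 := gA u hu1 hu2 hu3 hu4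
        have h2 := gI w hwI
        omega
      · have h1 := gA u hu1 hu2 hu3 hu4
        have h2 := gO w hwO
        omega
      · have h1 := gA u hu1 hu2 hu3 hu4
        have h2 := gA w hw1 hw2 hw3 hw4
        have hlt := idx_block pwLA ((memLA u).2 ⟨hu1, hu2, hu3, hu4⟩)
          ((memLA w).2 ⟨hw1, hw2, hw3, hw4⟩) huw
        omega
      · have h1 := gA u hu1 hu2 hu3 hu4
        have h2 := gB w hw1 hw2 hw3 hw4
        omega
      · have h1 := gA u hu1 hu2 hu3 hu4
        have h2 := gC w hw1 hw2 hw3 hw4 hw5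
        omega
    · -- u ∈ B
      rcases classify w with rfl | hwI | hwO | ⟨hw1, hw2, hw3, hw4⟩ | ⟨hw1, hw2, hw3, hw4⟩ |
        ⟨hw1, hw2, hw3, hw4, hw5⟩
      · exact absurd (hu4.trans huw) (hac v)
      · exact absurd (hu4.trans (huw.trans (Relation.TransGen.single hwI))) (hac v)
      · exact absurd (semiTrans_shortcut hst hwO hu4 huw).1 hu3
      · exact absurd (hu4.trans (huw.trans hw4)) (hac v)
      · have h1 := gB u hu1 hu2 hu3 hu4
        have h2 := gB w hw1 hw2 hw3 hw4
        have hlt := idx_block pwLB ((memLB u).2 ⟨hu1, hu2, hu3, hu4⟩)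
          ((memLB w).2 ⟨hw1, hw2, hw3, hw4⟩) huw
        omega
      · exact absurd (hu4.trans huw) hw5
    · -- u ∈ C
      have hbu : LC.idxOf u < LC.length :=
        List.idxOf_lt_length_iff.2 ((memLC u).2 ⟨hu1, hu2, hu3, hu4, hu5⟩)
      rcases classify w with rfl | hwI | hwO | ⟨hw1, hw2, hw3, hw4⟩ | ⟨hw1, hw2, hw3, hw4⟩ |
        ⟨hw1, hw2, hw3, hw4, hw5⟩
      · have h1 := gC u hu1 hu2 hu3 hu4 hu5
        have h2 := gv
        omega
      · exact absurd (huw.trans (Relation.TransGen.single hwI)) hu4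
      · have h1 := gC u hu1 hu2 hu3 hu4 hu5
        have h2 := gO w hwO
        omega
      · exact absurd (huw.trans hw4) hu4
      · have h1 := gC u hu1 hu2 hu3 hu4 hu5
        have h2 := gB w hw1 hw2 hw3 hw4
        omega
      · have h1 := gC u hu1 hu2 hu3 hu4 hu5
        have h2 := gC w hw1 hw2 hw3 hw4 hw5
        have hlt := idx_block pwLC ((memLC u).2 ⟨hu1, hu2, hu3, hu4, hu5⟩)
          ((memLC w).2 ⟨hw1, hw2, hw3, hw4, hw5⟩) huw
        omega
  have hAltArc : ∀ x y : V, E x y → Alternate W x y := by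
    intro x y hxy
    have hne : x ≠ y := fun h => hac y (Relation.TransGen.single (by rw [h] at hxy; exact hxy))
    rcases classify x with rfl | hxI | hxO | ⟨hx1, hx2, hx3, hx4⟩ | ⟨hx1, hx2, hx3, hx4⟩ |
        ⟨hx1, hx2, hx3, hx4, hx5⟩
    · rcases classify y with rfl | hyI | hyO | ⟨hy1, hy2, hy3, hy4⟩ | ⟨hy1, hy2, hy3, hy4⟩ |
          ⟨hy1, hy2, hy3, hy4, hy5⟩
      · exact (hac v (Relation.TransGen.single hxy)).elim
      · exact (hac v ((Relation.TransGen.single hxy).trans (Relation.TransGen.single hyI))).elim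
      · obtain ⟨hyv, hym, hyA, hyI, hyC, hyB⟩ := memsO y hyO
        have e1 : LA.filter (fun z => decide (z = v ∨ z = y)) = [] := filter_pair_nil hvA hyA
        have e2 : LI.filter (fun z => decide (z = v ∨ z = y)) = [] := filter_pair_nil hvI hyI
        have e3 : LC.filter (fun z => decide (z = v ∨ z = y)) = [] := filter_pair_nil hvC hyC
        have e4 : LO.filter (fun z => decide (z = v ∨ z = y)) = [y] :=
          filter_pair_right ndLO hvO hym
        have e5 : LB.filter (fun z => decide (z = v ∨ z = y)) = [] := filter_pair_nil hvB hyB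
        have e6 : [v].filter (fun z => decide (z = v ∨ z = y)) = [v] :=
          filter_pair_left (List.nodup_singleton v) (List.mem_singleton_self v)
            (fun hm => hyv (List.mem_singleton.1 hm))
        unfold Alternate
        rw [hW]
        simp only [List.filter_append, e1, e2, e3, e4, e5, e6]
        simp only [List.nil_append, List.append_nil, List.cons_append,
          List.singleton_append]
        exact chain'_quad hne
      · exact (hy3 hxy).elim
      · exact (hy3 hxy).elim
      · exact (hy3 hxy).elim
    · obtain ⟨hxv, hxm, hxA, hxC, hxO, hxB⟩ := memsI x hxI
      rcases classify y with rfl | hyI | hyO | ⟨hy1, hy2, hy3, hy4⟩ | ⟨hy1, hy2, hy3, hy4⟩ |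
            ⟨hy1, hy2, hy3, hy4, hy5⟩
      · have e1 : LA.filter (fun z => decide (z = x ∨ z = v)) = [] := filter_pair_nil hxA hvA
        have e2 : LI.filter (fun z => decide (z = x ∨ z = v)) = [x] :=
          filter_pair_left ndLI hxm hvI
        have e3 : LC.filter (fun z => decide (z = x ∨ z = v)) = [] := filter_pair_nil hxC hvC
        have e4 : LO.filter (fun z => decide (z = x ∨ z = v)) = [] := filter_pair_nil hxO hvO
        have e5 : LB.filter (fun z => decide (z = x ∨ z = v)) = [] := filter_pair_nil hxB hvB
        have e6 : [v].filter (fun z => decide (z = x ∨ z = v)) = [v] :=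
          filter_pair_right (List.nodup_singleton v)
            (fun hm => hxv (List.mem_singleton.1 hm)) (List.mem_singleton_self v)
        unfold Alternate
        rw [hW]
        simp only [List.filter_append, e1, e2, e3, e4, e5, e6]
        simp only [List.nil_append, List.append_nil, List.cons_append,
          List.singleton_append]
        exact chain'_quad hne
      · obtain ⟨hyv, hym, hyA, hyC, hyO, hyB⟩ := memsI y hyI
        have e1 : LA.filter (fun z => decide (z = x ∨ z = y)) = [] := filter_pair_nil hxA hyA
        have e3 : LC.filter (fun z => decide (z = x ∨ z = y)) = [] := filter_pair_nil hxC hyC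
        have e4 : LO.filter (fun z => decide (z = x ∨ z = y)) = [] := filter_pair_nil hxO hyO
        have e5 : LB.filter (fun z => decide (z = x ∨ z = y)) = [] := filter_pair_nil hxB hyB
        have e6 : [v].filter (fun z => decide (z = x ∨ z = y)) = [] :=
          filter_pair_nil (fun hm => hxv (List.mem_singleton.1 hm))
            (fun hm => hyv (List.mem_singleton.1 hm))
        rcases filter_pair_both ndLI hxm hym hne with hD | hD
        · unfold Alternate
          rw [hW]
          simp only [List.filter_append, e1, e3, e4, e5, e6, hD]
          simp only [List.nil_append, List.append_nil, List.cons_append, List.singleton_append]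
          exact chain'_quad hne
        · unfold Alternate
          rw [hW]
          simp only [List.filter_append, e1, e3, e4, e5, e6, hD]
          simp only [List.nil_append, List.append_nil, List.cons_append, List.singleton_append]
          exact chain'_quad (Ne.symm hne)
      · obtain ⟨hyv, hym, hyA, hyI2, hyC, hyB⟩ := memsO y hyO
        have e1 : LA.filter (fun z => decide (z = x ∨ z = y)) = [] := filter_pair_nil hxA hyA
        have e2 : LI.filter (fun z => decide (z = x ∨ z = y)) = [x] := filter_pair_left ndLI hxm hyI2
        have e3 : LC.filter (fun z => decide (z = x ∨ z = y)) = [] := filter_pair_nil hxC hyC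
        have e4 : LO.filter (fun z => decide (z = x ∨ z = y)) = [y] := filter_pair_right ndLO hxO hym
        have e5 : LB.filter (fun z => decide (z = x ∨ z = y)) = [] := filter_pair_nil hxB hyB
        have e6 : [v].filter (fun z => decide (z = x ∨ z = y)) = [] :=
          filter_pair_nil (fun hm => hxv (List.mem_singleton.1 hm))
            (fun hm => hyv (List.mem_singleton.1 hm))
        unfold Alternate
        rw [hW]
        simp only [List.filter_append, e1, e2, e3, e4, e5, e6]
        simp only [List.nil_append, List.append_nil, List.cons_append, List.singleton_append]
        exact chain'_quad hne
      · exact absurd (semiTrans_shortcut hst hxI (Relation.TransGen.single hxy) hy4).2 hy2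
      · exact absurd (semiTrans_shortcut hst hxy (Relation.TransGen.single hxI) hy4).2 hy3
      · obtain ⟨hym, hyA, hyI2, hyO, hyB⟩ := memsC y hy1 hy2 hy3 hy4 hy5
        have e1 : LA.filter (fun z => decide (z = x ∨ z = y)) = [] := filter_pair_nil hxA hyA
        have e2 : LI.filter (fun z => decide (z = x ∨ z = y)) = [x] := filter_pair_left ndLI hxm hyI2
        have e3 : LC.filter (fun z => decide (z = x ∨ z = y)) = [y] := filter_pair_right ndLC hxC hym
        have e4 : LO.filter (fun z => decide (z = x ∨ z = y)) = [] := filter_pair_nil hxO hyO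
        have e5 : LB.filter (fun z => decide (z = x ∨ z = y)) = [] := filter_pair_nil hxB hyB
        have e6 : [v].filter (fun z => decide (z = x ∨ z = y)) = [] :=
          filter_pair_nil (fun hm => hxv (List.mem_singleton.1 hm))
            (fun hm => hy1 (List.mem_singleton.1 hm))
        unfold Alternate
        rw [hW]
        simp only [List.filter_append, e1, e2, e3, e4, e5, e6]
        simp only [List.nil_append, List.append_nil, List.cons_append, List.singleton_append]
        exact chain'_quad hne
    · obtain ⟨hxv, hxm, hxA, hxI, hxC, hxB⟩ := memsO x hxO
      rcases classify y with rfl | hyI | hyO | ⟨hy1, hy2, hy3, hy4⟩ | ⟨hy1, hy2, hy3, hy4⟩ |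
            ⟨hy1, hy2, hy3, hy4, hy5⟩
      · exact (hac v ((Relation.TransGen.single hxO).trans (Relation.TransGen.single hxy))).elim
      · exact (hac v ((Relation.TransGen.single hxO).trans ((Relation.TransGen.single hxy).trans
          (Relation.TransGen.single hyI)))).elim
      · obtain ⟨hyv, hym, hyA, hyI2, hyC, hyB⟩ := memsO y hyO
        have e1 : LA.filter (fun z => decide (z = x ∨ z = y)) = [] := filter_pair_nil hxA hyA
        have e2 : LI.filter (fun z => decide (z = x ∨ z = y)) = [] := filter_pair_nil hxI hyI2
        have e3 : LC.filter (fun z => decide (z = x ∨ z = y)) = [] := filter_pair_nil hxC hyC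
        have e5 : LB.filter (fun z => decide (z = x ∨ z = y)) = [] := filter_pair_nil hxB hyB
        have e6 : [v].filter (fun z => decide (z = x ∨ z = y)) = [] :=
          filter_pair_nil (fun hm => hxv (List.mem_singleton.1 hm))
            (fun hm => hyv (List.mem_singleton.1 hm))
        rcases filter_pair_both ndLO hxm hym hne with hD | hD
        · unfold Alternate
          rw [hW]
          simp only [List.filter_append, e1, e2, e3, e5, e6, hD]
          simp only [List.nil_append, List.append_nil, List.cons_append, List.singleton_append]
          exact chain'_quad hne
        · unfold Alternate
          rw [hW]
          simp only [List.filter_append, e1, e2, e3, e5, e6, hD]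
          simp only [List.nil_append, List.append_nil, List.cons_append, List.singleton_append]
          exact chain'_quad (Ne.symm hne)
      · exact (hac v (((Relation.TransGen.single hxO).trans (Relation.TransGen.single hxy)).trans hy4)).elim
      · obtain ⟨hym, hyA, hyI2, hyC, hyO2⟩ := memsB y hy1 hy2 hy3 hy4
        have e1 : LA.filter (fun z => decide (z = x ∨ z = y)) = [] := filter_pair_nil hxA hyA
        have e2 : LI.filter (fun z => decide (z = x ∨ z = y)) = [] := filter_pair_nil hxI hyI2
        have e3 : LC.filter (fun z => decide (z = x ∨ z = y)) = [] := filter_pair_nil hxC hyC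
        have e4 : LO.filter (fun z => decide (z = x ∨ z = y)) = [x] := filter_pair_left ndLO hxm hyO2
        have e5 : LB.filter (fun z => decide (z = x ∨ z = y)) = [y] := filter_pair_right ndLB hxB hym
        have e6 : [v].filter (fun z => decide (z = x ∨ z = y)) = [] :=
          filter_pair_nil (fun hm => hxv (List.mem_singleton.1 hm))
            (fun hm => hy1 (List.mem_singleton.1 hm))
        unfold Alternate
        rw [hW]
        simp only [List.filter_append, e1, e2, e3, e4, e5, e6]
        simp only [List.nil_append, List.append_nil, List.cons_append, List.singleton_append]
        exact chain'_quad hne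
      · exact absurd ((Relation.TransGen.single hxO).trans (Relation.TransGen.single hxy)) hy5
    · obtain ⟨hxm, hxI, hxC, hxO, hxB⟩ := memsA x hx1 hx2 hx3 hx4
      rcases classify y with rfl | hyI | hyO | ⟨hy1, hy2, hy3, hy4⟩ | ⟨hy1, hy2, hy3, hy4⟩ |
            ⟨hy1, hy2, hy3, hy4, hy5⟩
      · exact (hx2 hxy).elim
      · obtain ⟨hyv, hym, hyA, hyC, hyO, hyB⟩ := memsI y hyI
        have e1 : LA.filter (fun z => decide (z = x ∨ z = y)) = [x] := filter_pair_left ndLA hxm hyA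
        have e2 : LI.filter (fun z => decide (z = x ∨ z = y)) = [y] := filter_pair_right ndLI hxI hym
        have e3 : LC.filter (fun z => decide (z = x ∨ z = y)) = [] := filter_pair_nil hxC hyC
        have e4 : LO.filter (fun z => decide (z = x ∨ z = y)) = [] := filter_pair_nil hxO hyO
        have e5 : LB.filter (fun z => decide (z = x ∨ z = y)) = [] := filter_pair_nil hxB hyB
        have e6 : [v].filter (fun z => decide (z = x ∨ z = y)) = [] :=
          filter_pair_nil (fun hm => hx1 (List.mem_singleton.1 hm))
            (fun hm => hyv (List.mem_singleton.1 hm))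
        unfold Alternate
        rw [hW]
        simp only [List.filter_append, e1, e2, e3, e4, e5, e6]
        simp only [List.nil_append, List.append_nil, List.cons_append, List.singleton_append]
        exact chain'_quad hne
      · exact absurd (semiTrans_shortcut hst hxy hx4 (Relation.TransGen.single hyO)).1 hx2
      · obtain ⟨hym, hyI2, hyC, hyO, hyB⟩ := memsA y hy1 hy2 hy3 hy4
        have e2 : LI.filter (fun z => decide (z = x ∨ z = y)) = [] := filter_pair_nil hxI hyI2
        have e3 : LC.filter (fun z => decide (z = x ∨ z = y)) = [] := filter_pair_nil hxC hyC
        have e4 : LO.filter (fun z => decide (z = x ∨ z = y)) = [] := filter_pair_nil hxO hyO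
        have e5 : LB.filter (fun z => decide (z = x ∨ z = y)) = [] := filter_pair_nil hxB hyB
        have e6 : [v].filter (fun z => decide (z = x ∨ z = y)) = [] :=
          filter_pair_nil (fun hm => hx1 (List.mem_singleton.1 hm))
            (fun hm => hy1 (List.mem_singleton.1 hm))
        rcases filter_pair_both ndLA hxm hym hne with hD | hD
        · unfold Alternate
          rw [hW]
          simp only [List.filter_append, e2, e3, e4, e5, e6, hD]
          simp only [List.nil_append, List.append_nil, List.cons_append, List.singleton_append]
          exact chain'_quad hne
        · unfold Alternate
          rw [hW]
          simp only [List.filter_append, e2, e3, e4, e5, e6, hD]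
          simp only [List.nil_append, List.append_nil, List.cons_append, List.singleton_append]
          exact chain'_quad (Ne.symm hne)
      · exact absurd (semiTrans_shortcut hst hxy hx4 hy4).1 hx2
      · obtain ⟨hym, hyA, hyI2, hyO, hyB⟩ := memsC y hy1 hy2 hy3 hy4 hy5
        have e1 : LA.filter (fun z => decide (z = x ∨ z = y)) = [x] := filter_pair_left ndLA hxm hyA
        have e2 : LI.filter (fun z => decide (z = x ∨ z = y)) = [] := filter_pair_nil hxI hyI2
        have e3 : LC.filter (fun z => decide (z = x ∨ z = y)) = [y] := filter_pair_right ndLC hxC hym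
        have e4 : LO.filter (fun z => decide (z = x ∨ z = y)) = [] := filter_pair_nil hxO hyO
        have e5 : LB.filter (fun z => decide (z = x ∨ z = y)) = [] := filter_pair_nil hxB hyB
        have e6 : [v].filter (fun z => decide (z = x ∨ z = y)) = [] :=
          filter_pair_nil (fun hm => hx1 (List.mem_singleton.1 hm))
            (fun hm => hy1 (List.mem_singleton.1 hm))
        unfold Alternate
        rw [hW]
        simp only [List.filter_append, e1, e2, e3, e4, e5, e6]
        simp only [List.nil_append, List.append_nil, List.cons_append, List.singleton_append]
        exact chain'_quad hne
    · obtain ⟨hxm, hxA, hxI, hxC, hxO⟩ := memsB x hx1 hx2 hx3 hx4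
      rcases classify y with rfl | hyI | hyO | ⟨hy1, hy2, hy3, hy4⟩ | ⟨hy1, hy2, hy3, hy4⟩ |
            ⟨hy1, hy2, hy3, hy4, hy5⟩
      · exact (hx2 hxy).elim
      · exact (hac v (hx4.trans ((Relation.TransGen.single hxy).trans
          (Relation.TransGen.single hyI)))).elim
      · exact absurd (semiTrans_shortcut hst hyO hx4 (Relation.TransGen.single hxy)).1 hx3
      · exact (hac v (hx4.trans ((Relation.TransGen.single hxy).trans hy4))).elim
      · obtain ⟨hym, hyA, hyI2, hyC, hyO⟩ := memsB y hy1 hy2 hy3 hy4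
        have e1 : LA.filter (fun z => decide (z = x ∨ z = y)) = [] := filter_pair_nil hxA hyA
        have e2 : LI.filter (fun z => decide (z = x ∨ z = y)) = [] := filter_pair_nil hxI hyI2
        have e3 : LC.filter (fun z => decide (z = x ∨ z = y)) = [] := filter_pair_nil hxC hyC
        have e4 : LO.filter (fun z => decide (z = x ∨ z = y)) = [] := filter_pair_nil hxO hyO
        have e6 : [v].filter (fun z => decide (z = x ∨ z = y)) = [] :=
          filter_pair_nil (fun hm => hx1 (List.mem_singleton.1 hm))
            (fun hm => hy1 (List.mem_singleton.1 hm))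
        rcases filter_pair_both ndLB hxm hym hne with hD | hD
        · unfold Alternate
          rw [hW]
          simp only [List.filter_append, e1, e2, e3, e4, e6, hD]
          simp only [List.nil_append, List.append_nil, List.cons_append, List.singleton_append]
          exact chain'_quad hne
        · unfold Alternate
          rw [hW]
          simp only [List.filter_append, e1, e2, e3, e4, e6, hD]
          simp only [List.nil_append, List.append_nil, List.cons_append, List.singleton_append]
          exact chain'_quad (Ne.symm hne)
      · exact absurd (hx4.trans (Relation.TransGen.single hxy)) hy5
    · obtain ⟨hxm, hxA, hxI, hxO, hxB⟩ := memsC x hx1 hx2 hx3 hx4 hx5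
      rcases classify y with rfl | hyI | hyO | ⟨hy1, hy2, hy3, hy4⟩ | ⟨hy1, hy2, hy3, hy4⟩ |
            ⟨hy1, hy2, hy3, hy4, hy5⟩
      · exact (hx2 hxy).elim
      · exact absurd ((Relation.TransGen.single hxy).trans (Relation.TransGen.single hyI)) hx4
      · obtain ⟨hyv, hym, hyA, hyI2, hyC, hyB⟩ := memsO y hyO
        have e1 : LA.filter (fun z => decide (z = x ∨ z = y)) = [] := filter_pair_nil hxA hyA
        have e2 : LI.filter (fun z => decide (z = x ∨ z = y)) = [] := filter_pair_nil hxI hyI2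
        have e3 : LC.filter (fun z => decide (z = x ∨ z = y)) = [x] := filter_pair_left ndLC hxm hyC
        have e4 : LO.filter (fun z => decide (z = x ∨ z = y)) = [y] := filter_pair_right ndLO hxO hym
        have e5 : LB.filter (fun z => decide (z = x ∨ z = y)) = [] := filter_pair_nil hxB hyB
        have e6 : [v].filter (fun z => decide (z = x ∨ z = y)) = [] :=
          filter_pair_nil (fun hm => hx1 (List.mem_singleton.1 hm))
            (fun hm => hyv (List.mem_singleton.1 hm))
        unfold Alternate
        rw [hW]
        simp only [List.filter_append, e1, e2, e3, e4, e5, e6]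
        simp only [List.nil_append, List.append_nil, List.cons_append, List.singleton_append]
        exact chain'_quad hne
      · exact absurd ((Relation.TransGen.single hxy).trans hy4) hx4
      · obtain ⟨hym, hyA, hyI2, hyC, hyO⟩ := memsB y hy1 hy2 hy3 hy4
        have e1 : LA.filter (fun z => decide (z = x ∨ z = y)) = [] := filter_pair_nil hxA hyA
        have e2 : LI.filter (fun z => decide (z = x ∨ z = y)) = [] := filter_pair_nil hxI hyI2
        have e3 : LC.filter (fun z => decide (z = x ∨ z = y)) = [x] := filter_pair_left ndLC hxm hyC
        have e4 : LO.filter (fun z => decide (z = x ∨ z = y)) = [] := filter_pair_nil hxO hyO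
        have e5 : LB.filter (fun z => decide (z = x ∨ z = y)) = [y] := filter_pair_right ndLB hxB hym
        have e6 : [v].filter (fun z => decide (z = x ∨ z = y)) = [] :=
          filter_pair_nil (fun hm => hx1 (List.mem_singleton.1 hm))
            (fun hm => hy1 (List.mem_singleton.1 hm))
        unfold Alternate
        rw [hW]
        simp only [List.filter_append, e1, e2, e3, e4, e5, e6]
        simp only [List.nil_append, List.append_nil, List.cons_append, List.singleton_append]
        exact chain'_quad hne
      · obtain ⟨hym, hyA, hyI2, hyO, hyB⟩ := memsC y hy1 hy2 hy3 hy4 hy5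
        have e1 : LA.filter (fun z => decide (z = x ∨ z = y)) = [] := filter_pair_nil hxA hyA
        have e2 : LI.filter (fun z => decide (z = x ∨ z = y)) = [] := filter_pair_nil hxI hyI2
        have e4 : LO.filter (fun z => decide (z = x ∨ z = y)) = [] := filter_pair_nil hxO hyO
        have e5 : LB.filter (fun z => decide (z = x ∨ z = y)) = [] := filter_pair_nil hxB hyB
        have e6 : [v].filter (fun z => decide (z = x ∨ z = y)) = [] :=
          filter_pair_nil (fun hm => hx1 (List.mem_singleton.1 hm))
            (fun hm => hy1 (List.mem_singleton.1 hm))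
        rcases filter_pair_both ndLC hxm hym hne with hD | hD
        · unfold Alternate
          rw [hW]
          simp only [List.filter_append, e1, e2, e4, e5, e6, hD]
          simp only [List.nil_append, List.append_nil, List.cons_append, List.singleton_append]
          exact chain'_quad hne
        · unfold Alternate
          rw [hW]
          simp only [List.filter_append, e1, e2, e4, e5, e6, hD]
          simp only [List.nil_append, List.append_nil, List.cons_append, List.singleton_append]
          exact chain'_quad (Ne.symm hne)
  have hNon : ∀ u : V, u ≠ v → ¬ E u v → ¬ E v u → ¬ Alternate W v u := by
    intro u h1 h2 h3
    have e6 : [v].filter (fun z => decide (z = v ∨ z = u)) = [v] :=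
      filter_pair_left (List.nodup_singleton v) (List.mem_singleton_self v)
        (fun hm => h1 (List.mem_singleton.1 hm))
    by_cases h4 : Relation.TransGen E u v
    · obtain ⟨hum, huI, huC, huO, huB⟩ := memsA u h1 h2 h3 h4
      have e1 : LA.filter (fun z => decide (z = v ∨ z = u)) = [u] :=
        filter_pair_right ndLA hvA hum
      have e2 : LI.filter (fun z => decide (z = v ∨ z = u)) = [] := filter_pair_nil hvI huI
      have e3 : LC.filter (fun z => decide (z = v ∨ z = u)) = [] := filter_pair_nil hvC huC
      have e4 : LO.filter (fun z => decide (z = v ∨ z = u)) = [] := filter_pair_nil hvO huO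
      have e5 : LB.filter (fun z => decide (z = v ∨ z = u)) = [] := filter_pair_nil hvB huB
      unfold Alternate
      rw [hW]
      simp only [List.filter_append, e1, e2, e3, e4, e5, e6]
      simp only [List.nil_append, List.append_nil, List.cons_append,
        List.singleton_append]
      intro hch
      exact (List.isChain_cons_cons.1 hch).1 rfl
    · by_cases h5 : Relation.TransGen E v u
      · obtain ⟨hum, huA, huI, huC, huO⟩ := memsB u h1 h2 h3 h5
        have e1 : LA.filter (fun z => decide (z = v ∨ z = u)) = [] := filter_pair_nil hvA huA
        have e2 : LI.filter (fun z => decide (z = v ∨ z = u)) = [] := filter_pair_nil hvI huI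
        have e3 : LC.filter (fun z => decide (z = v ∨ z = u)) = [] := filter_pair_nil hvC huC
        have e4 : LO.filter (fun z => decide (z = v ∨ z = u)) = [] := filter_pair_nil hvO huO
        have e5 : LB.filter (fun z => decide (z = v ∨ z = u)) = [u] :=
          filter_pair_right ndLB hvB hum
        unfold Alternate
        rw [hW]
        simp only [List.filter_append, e1, e2, e3, e4, e5, e6]
        simp only [List.nil_append, List.append_nil, List.cons_append,
          List.singleton_append]
        intro hch
        exact (List.isChain_cons_cons.1 hch).1 rfl
      · obtain ⟨hum, huA, huI, huO, huB⟩ := memsC u h1 h2 h3 h4 h5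
        have e1 : LA.filter (fun z => decide (z = v ∨ z = u)) = [] := filter_pair_nil hvA huA
        have e2 : LI.filter (fun z => decide (z = v ∨ z = u)) = [] := filter_pair_nil hvI huI
        have e3 : LC.filter (fun z => decide (z = v ∨ z = u)) = [u] :=
          filter_pair_right ndLC hvC hum
        have e4 : LO.filter (fun z => decide (z = v ∨ z = u)) = [] := filter_pair_nil hvO huO
        have e5 : LB.filter (fun z => decide (z = v ∨ z = u)) = [] := filter_pair_nil hvB huB
        unfold Alternate
        rw [hW]
        simp only [List.filter_append, e1, e2, e3, e4, e5, e6]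
        simp only [List.nil_append, List.append_nil, List.cons_append,
          List.singleton_append]
        intro hch
        exact (List.isChain_cons_cons.1 (List.isChain_cons_cons.1 hch).2).1 rfl
  refine ⟨W, hUnif, ⟨2, hUnif⟩, hOrd, ?_, ?_⟩
  · intro x y hadj
    rcases (hor x y).1 hadj with h | h
    · exact hAltArc x y h
    · exact (alternate_comm' W y x).1 (hAltArc y x h)
  · intro p hp
    obtain ⟨hne, hnadj, hv⟩ := hp
    rcases hv with h | h
    · rw [h] at hne hnadj ⊢
      exact hNon p.2 (fun hh => hne hh.symm)
        (fun hE => hnadj ((hor v p.2).2 (Or.inr hE)))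
        (fun hE => hnadj ((hor v p.2).2 (Or.inl hE)))
    · rw [h] at hne hnadj ⊢
      intro hA
      exact hNon p.1 hne (fun hE => hnadj ((hor p.1 v).2 (Or.inl hE)))
        (fun hE => hnadj ((hor p.1 v).2 (Or.inr hE)))
        ((alternate_comm' W p.1 v).1 hA)
end

section
/- A graph is word-representable if and only if it admits a semi-transitive orientation. -/
variable {V : Type*}

section Aux
variable {α : Type*} [DecidableEq α]

variable {α : Type*} [DecidableEq α]

lemma mem_take_iff_indexOf {l : List α} {a : α} {t : ℕ} (ha : a ∈ l) :
    a ∈ l.take t ↔ l.idxOf a < t := by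
  induction l generalizing t with
  | nil => simp at ha
  | cons b l ih =>
    cases t with
    | zero => simp
    | succ t =>
      by_cases hab : a = b
      · subst hab; simp [List.take_succ_cons]
      · have ha' : a ∈ l := by simpa [hab] using ha
        rw [List.take_succ_cons, List.idxOf_cons_ne _ (fun h => hab h.symm)]
        simp [hab, ih ha', Nat.succ_lt_succ_iff]

lemma count_take_indexOf {l : List α} {a : α} (h : a ∈ l) :
    (l.take (l.idxOf a + 1)).count a = 1 := by
  induction l with
  | nil => simp at h
  | cons b l ih =>
    by_cases hab : a = b
    · subst hab
      simp [List.idxOf_cons_self]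
    · have ha' : a ∈ l := by simpa [hab] using h
      rw [List.idxOf_cons_ne _ (fun h => hab h.symm), Nat.succ_eq_add_one]
      rw [List.take_succ_cons]
      simp [List.count_cons, hab, Ne.symm hab, ih ha']

def GoodAt (W : List α) (x y : α) (t : ℕ) : Prop :=
  (W.take t).count y ≤ (W.take t).count x ∧ (W.take t).count x ≤ (W.take t).count y + 1

def Good (W : List α) (x y : α) : Prop := ∀ t, GoodAt W x y t

def GoodP (w : List α) (x y : α) : Prop :=
  ∀ g, g <+: w → g.count y ≤ g.count x ∧ g.count x ≤ g.count y + 1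

lemma good_refl (W : List α) (x : α) : Good W x x := fun t => ⟨le_refl _, Nat.le_succ _⟩

lemma Good.indexOf_lt {W : List α} {x y : α} (hg : Good W x y) (hx : x ∈ W) (hy : y ∈ W)
    (hne : x ≠ y) : W.idxOf x < W.idxOf y := by
  have h := (hg (W.idxOf y + 1)).1
  rw [count_take_indexOf hy] at h
  have hxmem : x ∈ W.take (W.idxOf y + 1) := List.count_pos_iff.mp (by omega)
  have hlt : W.idxOf x < W.idxOf y + 1 := (mem_take_iff_indexOf hx).mp hxmem
  have : W.idxOf x ≠ W.idxOf y := fun h => hne ((List.idxOf_inj hx).mp h)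
  omega




lemma chainStep {x y : α} (hne : x ≠ y) (f : List α) (h2 : ∀ z ∈ f, z = x ∨ z = y)
    (IH : f.Chain' (· ≠ ·) ↔ GoodP f x y ∨ GoodP f y x) :
    (f ++ [x]).Chain' (· ≠ ·) ↔ GoodP (f ++ [x]) x y ∨ GoodP (f ++ [x]) y x := by
  have hcx : (f ++ [x]).count x = f.count x + 1 := by simp
  have hcy : (f ++ [x]).count y = f.count y := by
    simp [List.count_append, List.count_cons, hne.symm, hne]
  constructor
  · intro h
    replace h := List.isChain_append.mp h
    obtain ⟨hcf, -, hlast⟩ := h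
    have hl : ∀ a ∈ f.getLast?, a ≠ x := fun a ha => hlast a ha x (by simp)
    rcases IH.mp hcf with hg | hg
    · have h1 := hg f (List.prefix_refl f)
      rcases Nat.lt_or_ge (f.count y) (f.count x) with hlt | hge
      · -- count x f = count y f + 1, f ends with x or y; both contradict
        have hfne : f ≠ [] := by rintro rfl; simp at hlt
        rcases h2 _ (List.getLast_mem hfne) with hgx | hgy
        · exact absurd hgx (hl _ (by rw [List.getLast?_eq_getLast hfne]; rfl))
        · exfalso
          have hdp := hg _ (List.dropLast_prefix f)
          have hy' : f.count y = f.dropLast.count y + 1 := by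
            conv_lhs => rw [← List.dropLast_append_getLast hfne, hgy]
            simp
          have hx' : f.count x = f.dropLast.count x := by
            conv_lhs => rw [← List.dropLast_append_getLast hfne, hgy]
            simp [List.count_append, List.count_cons, hne, hne.symm]
          omega
      · left
        intro g hgpre
        rcases List.prefix_concat_iff.mp hgpre with rfl | hpf
        · rw [hcx, hcy]; omega
        · exact hg g hpf
    · have h1 := hg f (List.prefix_refl f)
      rcases Nat.lt_or_ge (f.count x) (f.count y) with hlt | hge
      · right
        intro g hgpre
        rcases List.prefix_concat_iff.mp hgpre with rfl | hpf
        · rw [hcx, hcy]; omega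
        · exact hg g hpf
      · by_cases hfne : f = []
        · subst hfne
          left
          intro g hgpre
          rcases List.prefix_concat_iff.mp hgpre with rfl | hpf
          · simp [List.count_cons, hne.symm, hne]
          · have : g = [] := List.prefix_nil.mp hpf
            subst this; simp
        · exfalso
          rcases h2 _ (List.getLast_mem hfne) with hgx | hgy
          · exact (hl _ (by rw [List.getLast?_eq_getLast hfne]; rfl)) hgx
          · have hdp := hg _ (List.dropLast_prefix f)
            have hy' : f.count y = f.dropLast.count y + 1 := by
              conv_lhs => rw [← List.dropLast_append_getLast hfne, hgy]
              simp
            have hx' : f.count x = f.dropLast.count x := by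
              conv_lhs => rw [← List.dropLast_append_getLast hfne, hgy]
              simp [List.count_append, List.count_cons, hne, hne.symm]
            omega
  · intro h
    have hgf : GoodP f x y ∨ GoodP f y x := by
      rcases h with h | h
      · exact Or.inl (fun g hg => h g (hg.trans (f.prefix_append [x])))
      · exact Or.inr (fun g hg => h g (hg.trans (f.prefix_append [x])))
    have hcf := IH.mpr hgf
    apply List.isChain_append.mpr
    refine ⟨hcf, List.isChain_singleton x, ?_⟩
    intro a ha b hb
    simp only [List.head?_cons, Option.mem_def, Option.some.injEq] at hb
    subst hb
    have hfne : f ≠ [] := by rintro rfl; simp at ha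
    rw [List.getLast?_eq_getLast hfne, Option.mem_def, Option.some.injEq] at ha
    subst ha
    intro hax
    have hfd : f.dropLast ++ [x] = f := by rw [← hax]; exact List.dropLast_append_getLast hfne
    have hccx : (f ++ [x]).count x = f.dropLast.count x + 2 := by
      rw [← hfd]; simp
    have hccy : (f ++ [x]).count y = f.dropLast.count y := by
      rw [← hfd]; simp [List.count_append, List.count_cons, hne.symm, hne]
    rcases h with hg | hg
    · have h2' := hg _ (List.prefix_refl (f ++ [x]))
      have h3 := hg f.dropLast ((List.dropLast_prefix f).trans (f.prefix_append [x]))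
      omega
    · have h2' := hg _ (List.prefix_refl (f ++ [x]))
      have h3 := hg f.dropLast ((List.dropLast_prefix f).trans (f.prefix_append [x]))
      omega

lemma twoLetter {x y : α} (hne : x ≠ y) (f : List α) (h2 : ∀ z ∈ f, z = x ∨ z = y) :
    f.Chain' (· ≠ ·) ↔ GoodP f x y ∨ GoodP f y x := by
  induction f using List.reverseRecOn with
  | nil =>
    simp only [show List.Chain' (· ≠ ·) ([] : List α) from List.isChain_nil, true_iff]
    left; intro g hg
    have : g = [] := List.prefix_nil.mp hg
    subst this; simp
  | append_singleton f a ih =>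
    have h2f : ∀ z ∈ f, z = x ∨ z = y := fun z hz => h2 z (by simp [hz])
    have IH := ih h2f
    rcases h2 a (by simp) with rfl | rfl
    · exact chainStep hne f h2f IH
    · have h2f' : ∀ z ∈ f, z = a ∨ z = x := fun z hz => (h2f z hz).symm
      exact (chainStep hne.symm f h2f' (IH.trans (or_comm))).trans (or_comm)

lemma prefix_filter_eq (p : α → Bool) (W : List α) :
    ∀ {g}, g <+: W.filter p → ∃ t, g = (W.take t).filter p := by
  induction W with
  | nil =>
    intro g hg
    refine ⟨0, ?_⟩
    simpa using List.prefix_nil.mp (by simpa using hg)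
  | cons a W ih =>
    intro g hg
    by_cases hpa : p a
    · rw [List.filter_cons_of_pos hpa] at hg
      rcases List.prefix_cons_iff.mp hg with rfl | ⟨t', rfl, ht'⟩
      · exact ⟨0, by simp⟩
      · obtain ⟨t, ht⟩ := ih ht'
        exact ⟨t + 1, by simp [List.take_succ_cons, List.filter_cons_of_pos hpa, ht]⟩
    · rw [List.filter_cons_of_neg (by simpa using hpa)] at hg
      obtain ⟨t, ht⟩ := ih hg
      exact ⟨t + 1, by simp [List.take_succ_cons, List.filter_cons_of_neg (by simpa using hpa), ht]⟩

lemma good_iff_goodP (W : List α) (x y : α) (p : α → Bool) (hpx : p x = true) (hpy : p y = true) :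
    Good W x y ↔ GoodP (W.filter p) x y := by
  constructor
  · intro h g hg
    obtain ⟨t, rfl⟩ := prefix_filter_eq p W hg
    have := h t
    rw [GoodAt] at this
    rwa [List.count_filter hpx, List.count_filter hpy]
  · intro h t
    have hpre : (W.take t).filter p <+: W.filter p := (List.take_prefix t W).filter p
    have := h _ hpre
    rw [List.count_filter hpx, List.count_filter hpy] at this
    exact this

lemma alternate_iff_good {W : List α} {x y : α} (hne : x ≠ y) :
    Alternate W x y ↔ Good W x y ∨ Good W y x := by
  have h2 : ∀ z ∈ W.filter (fun z => decide (z = x ∨ z = y)), z = x ∨ z = y := by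
    intro z hz
    simpa using (List.mem_filter.mp hz).2
  rw [show Alternate W x y ↔ (W.filter (fun z => decide (z = x ∨ z = y))).Chain' (· ≠ ·) from Iff.rfl,
    twoLetter hne _ h2,
    ← good_iff_goodP W x y _ (by simp) (by simp),
    ← good_iff_goodP W y x (fun z => decide (z = x ∨ z = y)) (by simp) (by simp)]

end Aux
section Forward
variable {V : Type*} [DecidableEq V]

theorem forward_dir {G : SimpleGraph V} (h : WordRepresentable G) :
    ∃ E : V → V → Prop, IsOrientation G E ∧ SemiTransitive E := by
  obtain ⟨W, hmem, hadj⟩ := h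
  refine ⟨fun x y => G.Adj x y ∧ Good W x y, ?_, ?_, ?_⟩
  · intro x y
    constructor
    · intro ha
      have hne := ha.ne
      rcases (alternate_iff_good hne).mp ((hadj x y hne).mp ha) with hg | hg
      · exact Or.inl ⟨ha, hg⟩
      · exact Or.inr ⟨ha.symm, hg⟩
    · rintro (⟨ha, -⟩ | ⟨ha, -⟩)
      exacts [ha, ha.symm]
  · -- Acyclic
    have step : ∀ {a b : V}, (G.Adj a b ∧ Good W a b) → W.idxOf a < W.idxOf b :=
      fun ⟨ha, hg⟩ => hg.indexOf_lt (hmem _) (hmem _) ha.ne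
    intro x hx
    have key : ∀ {a b : V}, Relation.TransGen (fun x y => G.Adj x y ∧ Good W x y) a b →
        W.idxOf a < W.idxOf b := by
      intro a b h
      induction h with
      | single hab => exact step hab
      | tail _ hbc ih => exact ih.trans (step hbc)
    exact lt_irrefl _ (key hx)
  · -- semi-transitivity
    intro k v harcs hshort
    intro i j hij
    set w : ℕ → V := fun n => v ⟨min n k, Nat.lt_succ_of_le (min_le_right n k)⟩ with hw
    have hwv : ∀ i : Fin (k+1), w i.val = v i := by
      intro i
      have : (⟨min i.val k, Nat.lt_succ_of_le (min_le_right _ k)⟩ : Fin (k+1)) = i := by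
        apply Fin.ext; simp; omega
      simp only [hw, this]
    have hconsec : ∀ n, n < k → (G.Adj (w n) (w (n+1)) ∧ Good W (w n) (w (n+1))) := by
      intro n hn
      have h1 : (⟨min n k, Nat.lt_succ_of_le (min_le_right _ k)⟩ : Fin (k+1)) =
          (⟨n, hn⟩ : Fin k).castSucc := by apply Fin.ext; simp; omega
      have h2 : (⟨min (n+1) k, Nat.lt_succ_of_le (min_le_right _ k)⟩ : Fin (k+1)) =
          (⟨n, hn⟩ : Fin k).succ := by apply Fin.ext; simp; omega
      have := harcs ⟨n, hn⟩
      simp only [hw, h1, h2]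
      exact this
    have hgoodc : ∀ n, Good W (w n) (w (n+1)) := by
      intro n
      rcases Nat.lt_or_ge n k with hn | hn
      · exact (hconsec n hn).2
      · have : w n = w (n+1) := by
          simp only [hw]; congr 1; apply Fin.ext; simp; omega
        rw [this]; exact good_refl W _
    have hmono : ∀ m n, m ≤ n → ∀ t, (W.take t).count (w n) ≤ (W.take t).count (w m) := by
      intro m n hmn
      induction n with
      | zero => intro t; have : m = 0 := by omega
                subst this; exact le_refl _
      | succ n ih =>
        rcases Nat.lt_or_ge m (n+1) with h' | h'
        · intro t
          exact le_trans ((hgoodc n t).1) (ih (by omega) t)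
        · have : m = n + 1 := by omega
          subst this; intro t; exact le_refl _
    have hidxmono : ∀ m n, m < n → n ≤ k → W.idxOf (w m) < W.idxOf (w n) := by
      intro m n
      induction n with
      | zero => omega
      | succ n ih =>
        intro hmn hnk
        have hstep : W.idxOf (w n) < W.idxOf (w (n+1)) :=
          ((hconsec n (by omega)).2).indexOf_lt (hmem _) (hmem _) (hconsec n (by omega)).1.ne
        rcases Nat.lt_or_ge m n with h' | h'
        · exact (ih h' (by omega)).trans hstep
        · have : m = n := by omega
          subst this; exact hstep
    have hne : v i ≠ v j := by
      have := hidxmono i.val j.val hij (by omega)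
      rw [hwv i, hwv j] at this
      intro h; rw [h] at this; exact lt_irrefl _ this
    have hgood : Good W (v i) (v j) := by
      intro t
      have h1 : (W.take t).count (v j) ≤ (W.take t).count (v i) := by
        have := hmono i.val j.val (le_of_lt hij) t
        rwa [hwv i, hwv j] at this
      have h2 : (W.take t).count (v i) ≤ (W.take t).count (v j) + 1 := by
        have ha := hmono 0 i.val (Nat.zero_le _) t
        have hb := hmono j.val k (by omega) t
        have hc := (hshort.2 t).2
        have hw0 : w 0 = v 0 := by
          have := hwv 0; simpa using this
        have hwk : w k = v (Fin.last k) := by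
          have := hwv (Fin.last k); simpa [Fin.last] using this
        rw [hwv i, hw0] at ha
        rw [hwv j, hwk] at hb
        omega
      exact ⟨h1, h2⟩
    exact ⟨(hadj _ _ hne).mpr ((alternate_iff_good hne).mpr (Or.inl hgood)), hgood⟩

end Forward
section Gadget
variable {β : Type*}

lemma chain_extend {R : β → β → Prop} :
    ∀ (l1 : List β) (a : β), List.Chain R a l1 → ∀ {m : β}, (a :: l1).getLast (by simp) = m →
      ∀ {l3 : List β}, List.Chain R m l3 → List.Chain R a (l1 ++ l3) := by
  intro l1
  induction l1 with
  | nil =>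
    intro a _ m hm l3 h3
    simp at hm
    subst hm
    simpa using h3
  | cons x l1' ih =>
    intro a hch m hm l3 h3
    replace hch := List.isChain_cons_cons.mp hch
    refine List.Chain.cons hch.1 (ih x hch.2 ?_ h3)
    simpa using hm

lemma getLast?_cons_append (l1 : List β) (a : β) (l3 : List β) (h : l3 ≠ []) :
    (a :: (l1 ++ l3)).getLast? = l3.getLast? := by
  rw [show a :: (l1 ++ l3) = (a :: l1) ++ l3 by simp]
  rw [List.getLast?_append, List.getLast?_eq_getLast h]
  rfl

lemma exists_topo_list_s4 [Fintype β] [DecidableEq β] (R : β → β → Prop)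
    (hR : ∀ x, ¬ Relation.TransGen R x x) :
    ∃ L : List β, L.Nodup ∧ (∀ b : β, b ∈ L) ∧
      ∀ a b, Relation.TransGen R a b → L.idxOf a < L.idxOf b := by
  classical
  set r' : β → β → Prop := fun a b => Relation.TransGen R a b ∨ a = b with hr'
  haveI : IsRefl β r' := ⟨fun a => Or.inr rfl⟩
  haveI : IsTrans β r' := ⟨by
    rintro a b c (hab | rfl) (hbc | rfl)
    · exact Or.inl (hab.trans hbc)
    · exact Or.inl hab
    · exact Or.inl hbc
    · exact Or.inr rfl⟩
  haveI : IsAntisymm β r' := ⟨by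
    rintro a b (hab | rfl)
    · rintro (hba | rfl)
      · exact absurd (hab.trans hba) (hR a)
      · rfl
    · intro _; rfl⟩
  haveI : IsPreorder β r' := ⟨⟩
  haveI : IsPartialOrder β r' := ⟨⟩
  obtain ⟨s, hs, hrs⟩ := extend_partialOrder r'
  haveI : IsLinearOrder β s := hs
  haveI : DecidableRel s := fun a b => Classical.propDecidable _
  refine ⟨Finset.univ.sort s, Finset.sort_nodup _ s, fun b => by simp [Finset.mem_sort], ?_⟩
  intro a b hab
  set L := Finset.univ.sort s with hL
  have ha : a ∈ L := by simp [hL, Finset.mem_sort]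
  have hb : b ∈ L := by simp [hL, Finset.mem_sort]
  have hne : a ≠ b := by rintro rfl; exact hR a hab
  have hsab : s a b := hrs a b (Or.inl hab)
  have hij : L.idxOf a ≠ L.idxOf b := fun h => hne ((List.idxOf_inj ha).mp h)
  rcases Nat.lt_or_ge (L.idxOf a) (L.idxOf b) with h | h
  · exact h
  · exfalso
    have hlt : L.idxOf b < L.idxOf a := by omega
    have hsorted : List.Pairwise s L := Finset.pairwise_sort _ s
    have hsba : s b a := by
      have := List.pairwise_iff_get.mp hsorted
        ⟨L.idxOf b, List.idxOf_lt_length_iff.mpr hb⟩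
        ⟨L.idxOf a, List.idxOf_lt_length_iff.mpr ha⟩ hlt
      rwa [List.idxOf_get, List.idxOf_get] at this
    exact hne (antisymm hsab hsba)

lemma transGen_union_cases {R : β → β → Prop} {A B : β} {x y : β}
    (h : Relation.TransGen (fun a b => R a b ∨ (a = A ∧ b = B)) x y) :
    Relation.TransGen R x y ∨
      (Relation.ReflTransGen R x A ∧ Relation.ReflTransGen R B y) ∨
      Relation.ReflTransGen R B A := by
  induction h with
  | single hab =>
    rcases hab with h | ⟨rfl, rfl⟩
    · exact Or.inl (Relation.TransGen.single h)
    · exact Or.inr (Or.inl ⟨Relation.ReflTransGen.refl, Relation.ReflTransGen.refl⟩)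
  | tail hxb hbc ih =>
    rcases hbc with h | ⟨rfl, rfl⟩
    · rcases ih with h1 | ⟨h1, h2⟩ | h1
      · exact Or.inl (h1.tail h)
      · exact Or.inr (Or.inl ⟨h1, h2.tail h⟩)
      · exact Or.inr (Or.inr h1)
    · rcases ih with h1 | ⟨h1, h2⟩ | h1
      · exact Or.inr (Or.inl ⟨h1.to_reflTransGen, Relation.ReflTransGen.refl⟩)
      · exact Or.inr (Or.inr h2)
      · exact Or.inr (Or.inr h1)

end Gadget
section ST
variable {V : Type*}

lemma semiTransitive_shortcut {E : V → V → Prop} (hst : SemiTransitive E)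
    {z u v w : V} (h1 : Relation.ReflTransGen E z u) (h2 : Relation.TransGen E u v)
    (h3 : Relation.ReflTransGen E v w) (h4 : E z w) : E u v := by
  obtain ⟨l1, hc1, hl1⟩ := List.exists_isChain_cons_of_relationReflTransGen h1
  obtain ⟨c, huc, hcv⟩ : ∃ c, E u c ∧ Relation.ReflTransGen E c v := by
    exact Relation.TransGen.head'_iff.mp h2
  obtain ⟨l2, hc2, hl2⟩ := List.exists_isChain_cons_of_relationReflTransGen hcv
  obtain ⟨l3, hc3, hl3⟩ := List.exists_isChain_cons_of_relationReflTransGen h3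
  have inner : List.Chain E c (l2 ++ l3) := chain_extend l2 c hc2 hl2 hc3
  have hchain : List.Chain E z (l1 ++ (c :: (l2 ++ l3))) :=
    chain_extend l1 z hc1 hl1 (List.Chain.cons huc inner)
  set L : List V := l1 ++ (c :: (l2 ++ l3)) with hLdef
  set P : List V := z :: L with hPdef
  have hPlen : P.length = L.length + 1 := by simp [hPdef]
  have hPne : P ≠ [] := by simp [hPdef]
  have hlastP : P.getLast? = some w := by
    by_cases h3e : l3 = []
    · subst h3e
      have hvw : v = w := by simpa using hl3
      have : P.getLast? = (c :: l2).getLast? := by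
        rw [hPdef, hLdef]
        simpa using getLast?_cons_append l1 z (c :: l2) (by simp)
      rw [this, List.getLast?_eq_getLast (by simp), hl2, hvw]
    · have e1 : P.getLast? = (c :: (l2 ++ l3)).getLast? := by
        rw [hPdef, hLdef]
        exact getLast?_cons_append l1 z _ (by simp)
      have e2 : (c :: (l2 ++ l3)).getLast? = l3.getLast? := getLast?_cons_append l2 c l3 h3e
      have e3 : l3.getLast (h3e) = w := by
        rw [← List.getLast_cons (a := v) h3e]
        exact hl3
      rw [e1, e2, List.getLast?_eq_getLast h3e, e3]
  set k := L.length with hk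
  set vf : Fin (k+1) → V := fun i => P[i.val]'(by rw [hPlen]; exact i.isLt) with hvf
  have hchain' : List.Chain' E P := hchain
  have harcs : ∀ i : Fin k, E (vf i.castSucc) (vf i.succ) := by
    intro i
    have := List.isChain_iff_getElem.mp hchain' i.val (by
      rw [hPlen]; simpa using i.isLt)
    simpa [hvf, Fin.castSucc, Fin.succ] using this
  have hget0 : vf 0 = z := by simp [hvf, hPdef]
  have hgetlast : vf (Fin.last k) = w := by
    have h5 : P.getLast hPne = w := by
      have := List.getLast?_eq_getLast hPne
      rw [hlastP] at this
      exact (Option.some.injEq _ _ ▸ this.symm : _)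
    rw [← h5, List.getLast_eq_getElem]
    simp [hvf, Fin.last, hPlen]
  have hshort : E (vf 0) (vf (Fin.last k)) := by rw [hget0, hgetlast]; exact h4
  set iu := l1.length with hiu
  set iv := l1.length + 1 + l2.length with hiv
  have hkval : k = l1.length + 1 + l2.length + l3.length := by
    simp [hk, hLdef]; omega
  have hiuk : iu < k + 1 := by omega
  have hivk : iv < k + 1 := by omega
  have hgetu : vf ⟨iu, hiuk⟩ = u := by
    have hsplit : P = (z :: l1) ++ (c :: (l2 ++ l3)) := by simp [hPdef, hLdef]
    have hlt : iu < (z :: l1).length := by simp [hiu]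
    have : P[iu]'(by rw [hPlen]; omega) = (z :: l1)[iu]'hlt := by
      rw [List.getElem_of_eq hsplit]
      exact List.getElem_append_left hlt
    rw [hvf]
    simp only [this]
    rw [← hl1, List.getLast_eq_getElem]
    simp [hiu]
  have hgetv : vf ⟨iv, hivk⟩ = v := by
    have hsplit : P = ((z :: l1) ++ (c :: l2)) ++ l3 := by simp [hPdef, hLdef]
    have hlt : iv < ((z :: l1) ++ (c :: l2)).length := by simp [hiv]; omega
    have e1 : P[iv]'(by rw [hPlen]; omega) = ((z :: l1) ++ (c :: l2))[iv]'hlt := by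
      rw [List.getElem_of_eq hsplit]
      exact List.getElem_append_left hlt
    have e2 : ((z :: l1) ++ (c :: l2)).getLast (by simp) = v := by
      rw [List.getLast_append (by simp)]
      simpa using hl2
    rw [hvf]
    simp only [e1]
    rw [← e2, List.getLast_eq_getElem]
    congr 1
    simp [hiv]
    omega
  have hlt : (⟨iu, hiuk⟩ : Fin (k+1)) < ⟨iv, hivk⟩ := by
    simp only [Fin.lt_def]
    omega
  have := hst.2 k vf harcs hshort ⟨iu, hiuk⟩ ⟨iv, hivk⟩ hlt
  rwa [hgetu, hgetv] at this

end ST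
section Piece
variable {V : Type*} [DecidableEq V]

lemma count_map_fst (z : V) : ∀ (l : List (V × Bool)), l.Nodup →
    (l.map Prod.fst).count z =
      (if (z, false) ∈ l then 1 else 0) + (if (z, true) ∈ l then 1 else 0) := by
  intro l
  induction l with
  | nil => simp
  | cons e l ih =>
    intro h
    obtain ⟨hel, hl⟩ := List.nodup_cons.mp h
    rcases e with ⟨w, b⟩
    rw [List.map_cons, List.count_cons, ih hl]
    by_cases hw : w = z
    · subst hw
      cases b
      · have h1 : (w, false) ∉ l := hel
        simp [List.mem_cons, h1]
        try omega
      · have h1 : (w, true) ∉ l := hel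
        simp [List.mem_cons, h1]
        try omega
    · have h1 : ((z, false) ∈ (w, b) :: l) ↔ (z, false) ∈ l := by
        simp [List.mem_cons, Prod.ext_iff, Ne.symm hw]
        try tauto
      have h2 : ((z, true) ∈ (w, b) :: l) ↔ (z, true) ∈ l := by
        simp [List.mem_cons, Prod.ext_iff, Ne.symm hw]
        try tauto
      rw [if_congr h1 rfl rfl, if_congr h2 rfl rfl]
      simp [hw]

lemma piece_core [Fintype V] {E : V → V → Prop} (H : V × Bool → V × Bool → Prop)
    (hac : ∀ a, ¬ Relation.TransGen H a a)
    (hedge : ∀ x y, E x y → H (x, false) (y, false) ∧ H (y, false) (x, true) ∧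
      H (x, true) (y, true))
    (hz : ∀ z : V, H (z, false) (z, true)) :
    ∃ (P : List V) (idx : V × Bool → ℕ),
      (∀ z, P.count z = 2) ∧ (∀ x y, E x y → Good P x y) ∧
      (∀ a b, H a b → idx a < idx b) ∧
      (∀ z t, (P.take t).count z =
        (if idx (z, false) < t then 1 else 0) + (if idx (z, true) < t then 1 else 0)) := by
  obtain ⟨L, hnd, hmem, hidx⟩ := exists_topo_list_s4 H hac
  refine ⟨L.map Prod.fst, fun e => @List.idxOf (V × Bool) instBEqOfDecidableEq e L,
    ?_, ?_, ?_, ?_⟩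
  · intro zz
    rw [count_map_fst zz L hnd]
    simp [hmem]
  · intro x y hxy t
    have hcnt : ∀ zz : V, ((L.map Prod.fst).take t).count zz =
        (if @List.idxOf (V × Bool) instBEqOfDecidableEq (zz, false) L < t then 1 else 0) +
        (if @List.idxOf (V × Bool) instBEqOfDecidableEq (zz, true) L < t then 1 else 0) := by
      intro zz
      rw [← List.map_take]
      rw [count_map_fst zz _ (List.Nodup.sublist (List.take_sublist t L) hnd)]
      simp only [show ∀ e : V × Bool,
          (e ∈ L.take t ↔ @List.idxOf (V × Bool) instBEqOfDecidableEq e L < t) from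
        fun e => mem_take_iff_indexOf (hmem e)]
    obtain ⟨h1, h2, h3⟩ := hedge x y hxy
    have e1 := hidx _ _ (Relation.TransGen.single h1)
    have e2 := hidx _ _ (Relation.TransGen.single h2)
    have e3 := hidx _ _ (Relation.TransGen.single h3)
    unfold GoodAt
    constructor <;> rw [hcnt x, hcnt y] <;> split_ifs <;> omega
  · intro a b h
    exact hidx a b (Relation.TransGen.single h)
  · intro zz t
    show ((L.map Prod.fst).take t).count zz =
      (if @List.idxOf (V × Bool) instBEqOfDecidableEq (zz, false) L < t then 1 else 0) +
      (if @List.idxOf (V × Bool) instBEqOfDecidableEq (zz, true) L < t then 1 else 0)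
    rw [← List.map_take]
    rw [count_map_fst zz _ (List.Nodup.sublist (List.take_sublist t L) hnd)]
    simp only [show ∀ e : V × Bool,
        (e ∈ L.take t ↔ @List.idxOf (V × Bool) instBEqOfDecidableEq e L < t) from
      fun e => mem_take_iff_indexOf (hmem e)]
end Piece
section PieceExists
variable {V : Type*}

def HzeroA (E : V → V → Prop) (a b : V × Bool) : Prop :=
  (a.1 = b.1 ∧ a.2 = false ∧ b.2 = true) ∨ (E a.1 b.1 ∧ a.2 = b.2) ∨
    (E b.1 a.1 ∧ a.2 = false ∧ b.2 = true)

def PsiA (E : V → V → Prop) (a b : V × Bool) : Prop :=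
  match a.2, b.2 with
  | false, false => Relation.TransGen E a.1 b.1
  | true, true => Relation.TransGen E a.1 b.1
  | false, true => ∃ w z, Relation.ReflTransGen E a.1 w ∧ (z = w ∨ E z w) ∧
      Relation.ReflTransGen E z b.1
  | true, false => False

lemma psiA_single {E : V → V → Prop} :
    ∀ {a b : V × Bool}, HzeroA E a b → PsiA E a b := by
  rintro ⟨a1, a2⟩ ⟨b1, b2⟩ (⟨h1, h2, h3⟩ | ⟨h1, h2⟩ | ⟨h1, h2, h3⟩)
  · obtain rfl : a2 = false := h2
    obtain rfl : b2 = true := h3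
    obtain rfl : a1 = b1 := h1
    exact ⟨a1, a1, .refl, Or.inl rfl, .refl⟩
  · obtain rfl : a2 = b2 := h2
    cases a2
    · exact Relation.TransGen.single h1
    · exact Relation.TransGen.single h1
  · obtain rfl : a2 = false := h2
    obtain rfl : b2 = true := h3
    exact ⟨a1, b1, .refl, Or.inr h1, .refl⟩

lemma psiA_step {E : V → V → Prop} :
    ∀ {a b c : V × Bool}, PsiA E a b → HzeroA E b c → PsiA E a c := by
  rintro ⟨a1, a2⟩ ⟨b1, b2⟩ ⟨c1, c2⟩ ih (⟨h1, h2, h3⟩ | ⟨h1, h2⟩ | ⟨h1, h2, h3⟩)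
  · obtain rfl : b2 = false := h2
    obtain rfl : c2 = true := h3
    obtain rfl : b1 = c1 := h1
    cases a2
    · exact ⟨b1, b1, (ih : Relation.TransGen E a1 b1).to_reflTransGen, Or.inl rfl, .refl⟩
    · exact (ih : False).elim
  · obtain rfl : b2 = c2 := h2
    cases b2
    · cases a2
      · exact (ih : Relation.TransGen E a1 b1).tail h1
      · exact (ih : False).elim
    · cases a2
      · obtain ⟨w, z, hw, hzw, hz⟩ := (ih : ∃ w z, Relation.ReflTransGen E a1 w ∧
          (z = w ∨ E z w) ∧ Relation.ReflTransGen E z b1)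
        exact ⟨w, z, hw, hzw, hz.tail h1⟩
      · exact (ih : Relation.TransGen E a1 b1).tail h1
  · obtain rfl : b2 = false := h2
    obtain rfl : c2 = true := h3
    cases a2
    · exact ⟨b1, c1, (ih : Relation.TransGen E a1 b1).to_reflTransGen, Or.inr h1, .refl⟩
    · exact (ih : False).elim

lemma psiA_of_transGen {E : V → V → Prop} {a b : V × Bool}
    (h : Relation.TransGen (HzeroA E) a b) : PsiA E a b := by
  induction h with
  | single hab => exact psiA_single hab
  | tail _ hbc ih => exact psiA_step ih hbc

def PsiB (E1 E2 : V → V → Prop) (a b : V × Bool) : Prop :=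
  match a.2, b.2 with
  | false, false => Relation.TransGen E1 a.1 b.1
  | true, true => Relation.TransGen E2 a.1 b.1
  | false, true => True
  | true, false => False

def HBrel (E1 E2 : V → V → Prop) (a b : V × Bool) : Prop :=
  (a.2 = false ∧ b.2 = true) ∨ (a.2 = false ∧ b.2 = false ∧ E1 a.1 b.1) ∨
    (a.2 = true ∧ b.2 = true ∧ E2 a.1 b.1)

lemma psiB_single {E1 E2 : V → V → Prop} :
    ∀ {a b : V × Bool}, HBrel E1 E2 a b → PsiB E1 E2 a b := by
  rintro ⟨a1, a2⟩ ⟨b1, b2⟩ (⟨h1, h2⟩ | ⟨h1, h2, h3⟩ | ⟨h1, h2, h3⟩)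
  · obtain rfl : a2 = false := h1
    obtain rfl : b2 = true := h2
    trivial
  · obtain rfl : a2 = false := h1
    obtain rfl : b2 = false := h2
    exact Relation.TransGen.single h3
  · obtain rfl : a2 = true := h1
    obtain rfl : b2 = true := h2
    exact Relation.TransGen.single h3

lemma psiB_step {E1 E2 : V → V → Prop} :
    ∀ {a b c : V × Bool}, PsiB E1 E2 a b → HBrel E1 E2 b c → PsiB E1 E2 a c := by
  rintro ⟨a1, a2⟩ ⟨b1, b2⟩ ⟨c1, c2⟩ ih (⟨h1, h2⟩ | ⟨h1, h2, h3⟩ | ⟨h1, h2, h3⟩)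
  · obtain rfl : b2 = false := h1
    obtain rfl : c2 = true := h2
    cases a2
    · trivial
    · exact (ih : False).elim
  · obtain rfl : b2 = false := h1
    obtain rfl : c2 = false := h2
    cases a2
    · exact (ih : Relation.TransGen E1 a1 b1).tail h3
    · exact (ih : False).elim
  · obtain rfl : b2 = true := h1
    obtain rfl : c2 = true := h2
    cases a2
    · trivial
    · exact (ih : Relation.TransGen E2 a1 b1).tail h3

lemma psiB_of_transGen {E1 E2 : V → V → Prop} {a b : V × Bool}
    (h : Relation.TransGen (HBrel E1 E2) a b) : PsiB E1 E2 a b := by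
  induction h with
  | single hab => exact psiB_single hab
  | tail _ hbc ih => exact psiB_step ih hbc

end PieceExists
section PieceMain
variable {V : Type*} [Fintype V] [DecidableEq V]

lemma piece_exists {E : V → V → Prop} (hst : SemiTransitive E) {u v : V}
    (hne : u ≠ v) (hEuv : ¬ E u v) (hvu : ¬ Relation.TransGen E v u) :
    ∃ P : List V, (∀ z : V, P.count z = 2) ∧ (∀ x y : V, E x y → Good P x y) ∧
      (∃ t, ¬ GoodAt P u v t) ∧ (∃ t, ¬ GoodAt P v u t) := by
  by_cases htuv : Relation.TransGen E u v
  · -- case A : there is a path from u to v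
    have key : Relation.ReflTransGen (HzeroA E) ((v, false) : V × Bool) (u, true) → False := by
      intro hrt
      rcases Relation.reflTransGen_iff_eq_or_transGen.mp hrt with heq | htg
      · simp at heq
      · obtain ⟨w, z, hvw, hzw, hzu⟩ := (psiA_of_transGen htg :
          ∃ w z, Relation.ReflTransGen E v w ∧ (z = w ∨ E z w) ∧ Relation.ReflTransGen E z u)
        rcases hzw with rfl | hzw
        · exact hst.1 v (Relation.TransGen.trans_right (hvw.trans hzu) htuv)
        · exact hEuv (semiTransitive_shortcut hst hzu htuv hvw hzw)
    have hacH : ∀ a : V × Bool, ¬ Relation.TransGen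
        (fun a b => HzeroA E a b ∨ (a = ((u, true) : V × Bool) ∧ b = ((v, false) : V × Bool)))
        a a := by
      intro a ha
      rcases transGen_union_cases ha with h | ⟨h1, h2⟩ | h
      · have := psiA_of_transGen h
        rcases a with ⟨a1, (_ | _)⟩
        · exact hst.1 a1 this
        · exact hst.1 a1 this
      · exact key (h2.trans h1)
      · exact key h
    obtain ⟨P, idx, hcount, hgood, hidx, hctake⟩ := piece_core (E := E)
      (fun a b => HzeroA E a b ∨ (a = ((u, true) : V × Bool) ∧ b = ((v, false) : V × Bool)))
      hacH
      (fun x y hxy => ⟨Or.inl (Or.inr (Or.inl ⟨hxy, rfl⟩)),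
        Or.inl (Or.inr (Or.inr ⟨hxy, rfl, rfl⟩)),
        Or.inl (Or.inr (Or.inl ⟨hxy, rfl⟩))⟩)
      (fun z => Or.inl (Or.inl ⟨rfl, rfl, rfl⟩))
    have i1 : idx (u, false) < idx (u, true) := hidx _ _ (Or.inl (Or.inl ⟨rfl, rfl, rfl⟩))
    have i2 : idx (u, true) < idx (v, false) := hidx _ _ (Or.inr ⟨rfl, rfl⟩)
    have i3 : idx (v, false) < idx (v, true) := hidx _ _ (Or.inl (Or.inl ⟨rfl, rfl, rfl⟩))
    have cu : (P.take (idx (u, true) + 1)).count u = 2 := by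
      rw [hctake]; split_ifs <;> omega
    have cv : (P.take (idx (u, true) + 1)).count v = 0 := by
      rw [hctake]; split_ifs <;> omega
    refine ⟨P, hcount, hgood, ⟨idx (u, true) + 1, ?_⟩, ⟨idx (u, true) + 1, ?_⟩⟩
    · intro hg
      have h2 := hg.2
      rw [cu, cv] at h2
      omega
    · intro hg
      have h1 := hg.1
      rw [cu, cv] at h1
      omega
  · -- case B : u and v are unrelated
    have keyvu : Relation.ReflTransGen E v u → False := by
      intro h
      rcases Relation.reflTransGen_iff_eq_or_transGen.mp h with heq | htg
      · exact hne heq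
      · exact hvu htg
    have keyuv : Relation.ReflTransGen E u v → False := by
      intro h
      rcases Relation.reflTransGen_iff_eq_or_transGen.mp h with heq | htg
      · exact hne heq.symm
      · exact htuv htg
    have hacH : ∀ a : V × Bool, ¬ Relation.TransGen
        (HBrel (fun x y => E x y ∨ (x = u ∧ y = v)) (fun x y => E x y ∨ (x = v ∧ y = u)))
        a a := by
      intro a ha
      have hpsi := psiB_of_transGen ha
      rcases a with ⟨a1, (_ | _)⟩
      · rcases transGen_union_cases (hpsi :
            Relation.TransGen (fun x y => E x y ∨ (x = u ∧ y = v)) a1 a1) with h | ⟨h1, h2⟩ | h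
        · exact hst.1 a1 h
        · exact keyvu (h2.trans h1)
        · exact keyvu h
      · rcases transGen_union_cases (hpsi :
            Relation.TransGen (fun x y => E x y ∨ (x = v ∧ y = u)) a1 a1) with h | ⟨h1, h2⟩ | h
        · exact hst.1 a1 h
        · exact keyuv (h2.trans h1)
        · exact keyuv h
    obtain ⟨P, idx, hcount, hgood, hidx, hctake⟩ := piece_core (E := E)
      (HBrel (fun x y => E x y ∨ (x = u ∧ y = v)) (fun x y => E x y ∨ (x = v ∧ y = u)))
      hacH
      (fun x y hxy => ⟨Or.inr (Or.inl ⟨rfl, rfl, Or.inl hxy⟩), Or.inl ⟨rfl, rfl⟩,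
        Or.inr (Or.inr ⟨rfl, rfl, Or.inl hxy⟩)⟩)
      (fun z => Or.inl ⟨rfl, rfl⟩)
    have iu12 : idx (u, false) < idx (u, true) := hidx _ _ (Or.inl ⟨rfl, rfl⟩)
    have iv12 : idx (v, false) < idx (v, true) := hidx _ _ (Or.inl ⟨rfl, rfl⟩)
    have iuv : idx (u, false) < idx (v, false) :=
      hidx _ _ (Or.inr (Or.inl ⟨rfl, rfl, Or.inr ⟨rfl, rfl⟩⟩))
    have ivu : idx (v, true) < idx (u, true) :=
      hidx _ _ (Or.inr (Or.inr ⟨rfl, rfl, Or.inr ⟨rfl, rfl⟩⟩))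
    refine ⟨P, hcount, hgood, ⟨idx (v, true) + 1, ?_⟩, ⟨idx (u, false) + 1, ?_⟩⟩
    · intro hg
      have h1 := hg.1
      rw [hctake, hctake] at h1
      split_ifs at h1 <;> omega
    · intro hg
      have h1 := hg.1
      rw [hctake, hctake] at h1
      split_ifs at h1 <;> omega

end PieceMain
section Assemble
variable {V : Type*} [DecidableEq V]

lemma good_append {P R : List V} {x y : V} (hP : Good P x y) (hR : Good R x y)
    (hcnt : P.count x = P.count y) : Good (P ++ R) x y := by
  intro t
  rcases le_or_gt t P.length with h | h
  · have he : (P ++ R).take t = P.take t := List.take_append_of_le_length h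
    unfold GoodAt
    rw [he]
    exact hP t
  · have he : (P ++ R).take t = P ++ R.take (t - P.length) := by
      rw [List.take_append, List.take_of_length_le (by omega)]
    have h1 := hR (t - P.length)
    unfold GoodAt at h1 ⊢
    rw [he, List.count_append, List.count_append]
    omega

lemma good_flatten {Ps : List (List V)} {x y : V}
    (h : ∀ P ∈ Ps, Good P x y ∧ P.count x = P.count y) : Good Ps.flatten x y := by
  induction Ps with
  | nil =>
    intro t
    unfold GoodAt
    simp
  | cons P Ps ih =>
    rw [List.flatten_cons]
    exact good_append (h P (by simp)).1 (ih fun Q hQ => h Q (by simp [hQ])) (h P (by simp)).2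

lemma count_flatten_eq {Ps : List (List V)} {x y : V}
    (h : ∀ P ∈ Ps, P.count x = P.count y) : Ps.flatten.count x = Ps.flatten.count y := by
  induction Ps with
  | nil => simp
  | cons P Ps ih =>
    rw [List.flatten_cons, List.count_append, List.count_append, h P (by simp),
      ih fun Q hQ => h Q (by simp [hQ])]

lemma notgood_lift {B Wp A : List V} {x y : V} (hB : B.count x = B.count y)
    (hv : ∃ t, ¬ GoodAt Wp x y t) : ∃ t, ¬ GoodAt (B ++ (Wp ++ A)) x y t := by
  obtain ⟨t0, ht0⟩ := hv
  set t := min t0 Wp.length with htdef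
  have htW : Wp.take t = Wp.take t0 := by
    rcases le_or_gt t0 Wp.length with h | h
    · rw [htdef, min_eq_left h]
    · rw [htdef, min_eq_right (by omega), List.take_of_length_le (le_refl _),
        List.take_of_length_le (by omega)]
  have ht : ¬ GoodAt Wp x y t := by
    unfold GoodAt
    rw [htW]
    exact ht0
  refine ⟨B.length + t, ?_⟩
  have he : (B ++ (Wp ++ A)).take (B.length + t) = B ++ Wp.take t := by
    rw [List.take_append, List.take_of_length_le (by omega)]
    congr 1
    rw [show B.length + t - B.length = t by omega]
    exact List.take_append_of_le_length (by omega)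
  intro hg
  apply ht
  unfold GoodAt at hg ⊢
  rw [he, List.count_append, List.count_append] at hg
  omega

lemma count_take_nodup {P0 : List V} (hnd : P0.Nodup) {z : V} (hz : z ∈ P0) (t : ℕ) :
    (P0.take t).count z = if P0.idxOf z < t then 1 else 0 := by
  by_cases h : P0.idxOf z < t
  · rw [if_pos h]
    exact List.count_eq_one_of_mem (hnd.sublist (List.take_sublist t P0))
      ((mem_take_iff_indexOf hz).mpr h)
  · rw [if_neg h]
    exact List.count_eq_zero_of_not_mem (fun hm => h ((mem_take_iff_indexOf hz).mp hm))

end Assemble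

theorem backward_dir {V : Type*} [Fintype V] [DecidableEq V] {G : SimpleGraph V}
    {E : V → V → Prop} (horient : IsOrientation G E) (hst : SemiTransitive E) :
    WordRepresentable G := by
  classical
  obtain ⟨P0, hP0nd, hP0mem, hP0idx⟩ := exists_topo_list_s4 E hst.1
  have hP0count : ∀ z : V, P0.count z = 1 := fun z =>
    List.count_eq_one_of_mem hP0nd (hP0mem z)
  have hP0good : ∀ x y : V, E x y → Good P0 x y := by
    intro x y hxy t
    have hidx := hP0idx x y (Relation.TransGen.single hxy)
    unfold GoodAt
    rw [count_take_nodup hP0nd (hP0mem x), count_take_nodup hP0nd (hP0mem y)]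
    split_ifs <;> omega
  set pairs : List (V × V) := (Finset.univ.filter
    (fun p : V × V => p.1 ≠ p.2 ∧ ¬ G.Adj p.1 p.2)).toList with hpairs
  have hpc : ∀ p : V × V, ∃ P : List V, (∀ z, P.count z = 2) ∧
      (∀ x y, E x y → Good P x y) ∧
      (p.1 ≠ p.2 → ¬ G.Adj p.1 p.2 →
        (∃ t, ¬ GoodAt P p.1 p.2 t) ∧ (∃ t, ¬ GoodAt P p.2 p.1 t)) := by
    intro p
    by_cases hcond : p.1 ≠ p.2 ∧ ¬ G.Adj p.1 p.2
    · obtain ⟨hne, hnadj⟩ := hcond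
      have hEuv : ¬ E p.1 p.2 := fun h => hnadj ((horient p.1 p.2).mpr (Or.inl h))
      have hEvu : ¬ E p.2 p.1 := fun h => hnadj ((horient p.1 p.2).mpr (Or.inr h))
      by_cases hvu : Relation.TransGen E p.2 p.1
      · have huv : ¬ Relation.TransGen E p.1 p.2 := fun h => hst.1 p.1 (h.trans hvu)
        obtain ⟨P, h1, h2, h3, h4⟩ := piece_exists hst (Ne.symm hne) hEvu huv
        exact ⟨P, h1, h2, fun _ _ => ⟨h4, h3⟩⟩
      · obtain ⟨P, h1, h2, h3, h4⟩ := piece_exists hst hne hEuv hvu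
        exact ⟨P, h1, h2, fun _ _ => ⟨h3, h4⟩⟩
    · refine ⟨P0 ++ P0, ?_, ?_, fun h1 h2 => absurd ⟨h1, h2⟩ hcond⟩
      · intro z
        rw [List.count_append, hP0count]
      · intro x y hxy
        exact good_append (hP0good x y hxy) (hP0good x y hxy)
          (by rw [hP0count, hP0count])
  choose f hf1 hf2 hf3 using hpc
  set pieces : List (List V) := pairs.map f with hpieces
  set W : List V := (P0 :: pieces).flatten with hW
  have hallp : ∀ Q ∈ (P0 :: pieces), (∀ z z' : V, Q.count z = Q.count z') ∧
      (∀ x y, E x y → Good Q x y) := by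
    intro Q hQ
    rcases List.mem_cons.mp hQ with rfl | hQ
    · exact ⟨fun z z' => by rw [hP0count, hP0count], hP0good⟩
    · obtain ⟨p, hp, rfl⟩ := List.mem_map.mp hQ
      exact ⟨fun z z' => by rw [hf1 p, hf1 p], hf2 p⟩
  refine ⟨W, fun x => ?_, fun x y hne => ?_⟩
  · rw [hW, List.flatten_cons]
    exact List.mem_append_left _ (hP0mem x)
  · rw [alternate_iff_good hne]
    by_cases hadj : G.Adj x y
    · constructor
      · intro _
        rcases (horient x y).mp hadj with hE | hE
        · exact Or.inl (good_flatten fun Q hQ =>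
            ⟨(hallp Q hQ).2 x y hE, (hallp Q hQ).1 x y⟩)
        · exact Or.inr (good_flatten fun Q hQ =>
            ⟨(hallp Q hQ).2 y x hE, (hallp Q hQ).1 y x⟩)
      · intro _
        exact hadj
    · have hmem : (x, y) ∈ pairs := by
        rw [hpairs, Finset.mem_toList, Finset.mem_filter]
        exact ⟨Finset.mem_univ _, hne, hadj⟩
      obtain ⟨l1, l2, hsplit⟩ := List.append_of_mem hmem
      have hWsplit : W = (P0 ++ (l1.map f).flatten) ++ (f (x, y) ++ (l2.map f).flatten) := by
        rw [hW, hpieces, hsplit]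
        simp [List.flatten_cons, List.flatten_append, List.append_assoc]
      have hBcount : ∀ z z' : V, (P0 ++ (l1.map f).flatten).count z =
          (P0 ++ (l1.map f).flatten).count z' := by
        intro z z'
        rw [List.count_append, List.count_append, hP0count, hP0count,
          count_flatten_eq (fun Q hQ => ?_)]
        obtain ⟨p, hp, rfl⟩ := List.mem_map.mp hQ
        rw [hf1 p, hf1 p]
      obtain ⟨hv1, hv2⟩ := hf3 (x, y) hne hadj
      constructor
      · intro h
        exact absurd h hadj
      · rintro (hg | hg)
        · obtain ⟨t, hng⟩ := notgood_lift (hBcount x y) hv1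
          rw [← hWsplit] at hng
          exact absurd (hg t) hng
        · obtain ⟨t, hng⟩ := notgood_lift (hBcount y x) hv2
          rw [← hWsplit] at hng
          exact absurd (hg t) hng

/-- A graph is word-representable iff it admits a semi-transitive
orientation. -/
theorem stmt_4 {V : Type*} [Fintype V] [DecidableEq V] (G : SimpleGraph V) :
    WordRepresentable G ↔ ∃ E : V → V → Prop, IsOrientation G E ∧ SemiTransitive E := by
  constructor
  · exact forward_dir
  · rintro ⟨E, horient, hst⟩
    exact backward_dir horient hst
end
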